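/- arXiv:1003.2257 — 8 statements merged into one kernel-verified Lean document; each statement's English description precedes it below -/
import Mathlib

section
/- Let f be a probability density function on (0,∞) with cumulative distribution function F, and suppose sup_{y>0} |f'(y)| ≤ μ for some μ > 0. Fix a > 0, r > 1, an integer N ≥ 3, and let y_n = a·r^{n−1} for 1 ≤ n ≤ N be a geometric quantization codebook. Define 𝒫(y_1,...,y_N) = Σ_{n=1}^{N} (F(y_{n+1}) − F(y_n))/y_n with y_{N+1} = ∞. Then for every n with 2 ≤ n ≤ N−1, the partial derivative satisfies ∂𝒫/∂y_n = (1/y_n²)·[f(y_n)·(y_{n+1} − y_n) − ∫_{y_n}^{y_{n+1}} f(y) dy], and consequently |∂𝒫/∂y_n| ≤ (1/2)·μ·(r − 1)². -/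
open MeasureTheory Set

/-- for a geometric codebook `y k = a * r ^ (k-1)`, the partial
derivative of the normalized average power with respect to `y n`
(for `2 ≤ n ≤ N-1`) equals
`(1/y_n²)·[f(y_n)·(y_{n+1} − y_n) − ∫_{y_n}^{y_{n+1}} f]`, and is bounded in
absolute value by `(1/2)·μ·(r−1)²`. -/
theorem stmt1
    (f f' F : ℝ → ℝ) (μ : ℝ) (hμ : 0 < μ)
    (hfnn : ∀ x ∈ Ioi (0:ℝ), 0 ≤ f x)
    (hfder : ∀ x ∈ Ioi (0:ℝ), HasDerivAt f (f' x) x)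
    (hf'bd : ∀ x ∈ Ioi (0:ℝ), |f' x| ≤ μ)
    (hfint : IntegrableOn f (Ioi 0))
    (hfone : ∫ x in Ioi (0:ℝ), f x = 1)
    (hF : ∀ x, F x = ∫ t in Ioc (0:ℝ) x, f t)
    (hF' : ∀ x ∈ Ioi (0:ℝ), HasDerivAt F (f x) x)
    (a r : ℝ) (ha : 0 < a) (hr : 1 < r)
    (N : ℕ) (hN : 3 ≤ N)
    (n : ℕ) (hn2 : 2 ≤ n) (hnN : n ≤ N - 1) :
    HasDerivAt
      (fun t : ℝ =>
        ∑ k ∈ Finset.Icc 1 N,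
          ((if k = N then (1:ℝ) else F (if k + 1 = n then t else a * r ^ k)) -
              F (if k = n then t else a * r ^ (k - 1))) /
            (if k = n then t else a * r ^ (k - 1)))
      (1 / (a * r ^ (n - 1)) ^ 2 *
        (f (a * r ^ (n - 1)) * (a * r ^ n - a * r ^ (n - 1)) -
          ∫ t in (a * r ^ (n - 1))..(a * r ^ n), f t))
      (a * r ^ (n - 1)) ∧
    |1 / (a * r ^ (n - 1)) ^ 2 *
        (f (a * r ^ (n - 1)) * (a * r ^ n - a * r ^ (n - 1)) -
          ∫ t in (a * r ^ (n - 1))..(a * r ^ n), f t)| ≤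
      1 / 2 * μ * (r - 1) ^ 2 := by
  have hr0 : (0:ℝ) < r := lt_trans one_pos hr
  have hb0 : (0:ℝ) < a * r ^ (n - 1) := by positivity
  set b : ℝ := a * r ^ (n - 1) with hbdef
  set c : ℝ := a * r ^ n with hcdef
  have hbne : b ≠ 0 := ne_of_gt hb0
  have hcrb : c = r * b := by
    have h : r ^ n = r ^ (n - 1) * r := by rw [← pow_succ]; congr 1; omega
    rw [hcdef, hbdef, h]; ring
  have hbc : b < c := by rw [hcrb]; nlinarith
  have hsubIoc : Ioc b c ⊆ Ioi (0:ℝ) := fun x hx => mem_Ioi.mpr (lt_trans hb0 hx.1)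
  have hint0 : ∀ v : ℝ, 0 ≤ v → IntervalIntegrable f volume 0 v := fun v hv =>
    (intervalIntegrable_iff_integrableOn_Ioc_of_le hv).mpr (hfint.mono_set Ioc_subset_Ioi_self)
  have hintbc : IntervalIntegrable f volume b c :=
    (intervalIntegrable_iff_integrableOn_Ioc_of_le hbc.le).mpr (hfint.mono_set hsubIoc)
  have hFsub : F c - F b = ∫ t in b..c, f t := by
    rw [hF c, hF b, ← intervalIntegral.integral_of_le (le_of_lt (lt_trans hb0 hbc)),
        ← intervalIntegral.integral_of_le hb0.le]
    exact intervalIntegral.integral_interval_sub_left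
      (hint0 c (le_of_lt (lt_trans hb0 hbc))) (hint0 b hb0.le)
  set A : ℝ := f b / (a * r ^ (n - 1 - 1)) with hAdef
  set B : ℝ := ((0 - f b) * b - (F c - F b) * 1) / b ^ 2 with hBdef
  have hderiv : HasDerivAt
      (fun t : ℝ =>
        ∑ k ∈ Finset.Icc 1 N,
          ((if k = N then (1:ℝ) else F (if k + 1 = n then t else a * r ^ k)) -
              F (if k = n then t else a * r ^ (k - 1))) /
            (if k = n then t else a * r ^ (k - 1)))
      (∑ k ∈ Finset.Icc 1 N, ((if k = n - 1 then A else 0) + (if k = n then B else 0))) b := by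
    apply HasDerivAt.fun_sum
    intro k hk
    by_cases h1 : k = n - 1
    · simp only [h1, if_pos rfl, if_neg (show ¬(n - 1 = n) by omega),
        if_neg (show ¬(n - 1 = N) by omega), show n - 1 + 1 = n from by omega,
        eq_self_iff_true, if_true, add_zero]
      exact ((hF' b (mem_Ioi.mpr hb0)).sub_const _).div_const _
    · by_cases h2 : k = n
      · simp only [h2, eq_self_iff_true, if_true, if_neg h1, if_neg (show ¬(n = N) by omega),
          if_neg (show ¬(n + 1 = n) by omega), zero_add,
          if_neg (show ¬(n = n - 1) by omega)]
        rw [← hcdef]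
        exact ((hasDerivAt_const b (F c)).sub (hF' b (mem_Ioi.mpr hb0))).div
          (hasDerivAt_id' b) hbne
      · simp only [if_neg h1, if_neg h2, if_neg (show ¬(k + 1 = n) by omega), add_zero]
        exact hasDerivAt_const b _
  have hsumval : (∑ k ∈ Finset.Icc 1 N,
      ((if k = n - 1 then A else 0) + (if k = n then B else 0))) = A + B := by
    rw [Finset.sum_add_distrib, Finset.sum_ite_eq' _ (n - 1) (fun _ => A),
      Finset.sum_ite_eq' _ n (fun _ => B), if_pos (by simp [Finset.mem_Icc]; omega),
      if_pos (by simp [Finset.mem_Icc]; omega)]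
  have hpow : a * r ^ (n - 1 - 1) * r = b := by
    have h : r ^ (n - 1) = r ^ (n - 1 - 1) * r := by rw [← pow_succ]; congr 1; omega
    rw [hbdef, h]; ring
  have hd : a * r ^ (n - 1 - 1) = b / r := by
    rw [eq_div_iff (ne_of_gt hr0)]; exact hpow
  have hAB : A + B = 1 / b ^ 2 * (f b * (c - b) - ∫ t in b..c, f t) := by
    rw [hAdef, hBdef, ← hFsub, hd, hcrb]
    field_simp
    ring
  constructor
  · have h := hderiv
    rw [hsumval, hAB] at h
    exact h
  · have hptwise : ∀ t ∈ Icc b c, |f b - f t| ≤ μ * (t - b) := by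
      intro t ht
      have h1 : t ∈ Ioi (0:ℝ) := mem_Ioi.mpr (lt_of_lt_of_le hb0 ht.1)
      have h2 := Convex.norm_image_sub_le_of_norm_hasDerivWithin_le
        (f' := f') (fun x hx => (hfder x hx).hasDerivWithinAt)
        (fun x hx => by simpa [Real.norm_eq_abs] using hf'bd x hx)
        (convex_Ioi 0) (mem_Ioi.mpr hb0) h1
      rw [abs_sub_comm]
      calc |f t - f b| ≤ μ * |t - b| := by simpa [Real.norm_eq_abs] using h2
        _ = μ * (t - b) := by rw [abs_of_nonneg (by linarith [ht.1])]
    have hint2 : IntervalIntegrable (fun t => |f b - f t|) volume b c :=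
      (IntervalIntegrable.sub intervalIntegrable_const hintbc).abs
    have hint3 : IntervalIntegrable (fun t => μ * (t - b)) volume b c :=
      Continuous.intervalIntegrable (continuous_const.mul (continuous_id.sub continuous_const)) _ _
    have hmono : (∫ t in b..c, |f b - f t|) ≤ ∫ t in b..c, μ * (t - b) :=
      intervalIntegral.integral_mono_on hbc.le hint2 hint3 hptwise
    have habs : |∫ t in b..c, (f b - f t)| ≤ ∫ t in b..c, |f b - f t| :=
      intervalIntegral.abs_integral_le_integral_abs hbc.le
    have hval : (∫ t in b..c, μ * (t - b)) = μ * (c - b) ^ 2 / 2 := by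
      rw [intervalIntegral.integral_const_mul]
      have h3 : (∫ t in b..c, (t - b)) = (c ^ 2 - b ^ 2) / 2 - (c - b) * b := by
        have hid : IntervalIntegrable (fun t : ℝ => t) volume b c :=
          Continuous.intervalIntegrable continuous_id' _ _
        rw [intervalIntegral.integral_sub hid intervalIntegrable_const, integral_id,
          intervalIntegral.integral_const]
        simp [smul_eq_mul]
      rw [h3]; ring
    have hrepr : f b * (c - b) - (∫ t in b..c, f t) = ∫ t in b..c, (f b - f t) := by
      rw [intervalIntegral.integral_sub intervalIntegrable_const hintbc,
          intervalIntegral.integral_const]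
      simp [smul_eq_mul]; ring
    rw [hrepr, abs_mul, abs_of_pos (show (0:ℝ) < 1 / b ^ 2 by positivity)]
    have h2 : |∫ t in b..c, (f b - f t)| ≤ μ * (c - b) ^ 2 / 2 :=
      le_trans habs (hval ▸ hmono)
    have hcb2 : (c - b) ^ 2 = (r - 1) ^ 2 * b ^ 2 := by rw [hcrb]; ring
    calc 1 / b ^ 2 * |∫ t in b..c, (f b - f t)|
        ≤ 1 / b ^ 2 * (μ * (c - b) ^ 2 / 2) := by
          apply mul_le_mul_of_nonneg_left h2 (by positivity)
      _ = 1 / 2 * μ * (r - 1) ^ 2 := by rw [hcb2]; field_simp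
end

section
/- (Lemma 1) Let f be a positive differentiable probability density function on (0,∞) with cumulative distribution function F and with sup_{y>0} |f'(y)| ≤ μ for some μ > 0. Fix a > 0, r > 1, an integer N ≥ 3, and the geometric codebook y_n = a·r^{n−1}, 1 ≤ n ≤ N. Define 𝒫 = Σ_{n=1}^{N} (F(y_{n+1}) − F(y_n))/y_n with y_{N+1} = ∞, regarded as a function of y_2,...,y_N with y_1 = a fixed. Then the Euclidean norm of the gradient satisfies ‖∇𝒫‖ = (Σ_{n=2}^{N} (∂𝒫/∂y_n)²)^{1/2} ≤ (1/2)·μ·√N·(r − 1)² + D, where D = |(1/y²)·((r − 1)·y·f(y) − ∫_y^∞ f(t) dt)| evaluated at y = a·r^{N−1}. -/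
open MeasureTheory Set

/-- The geometric (uniform in dB) quantization levels `y n = a * r^(n-1)`. -/
noncomputable def quantLevels (a r : ℝ) (n : ℕ) : ℝ := a * r ^ (n - 1)

/-- The normalized average power `𝒫` regarded as a function of the single level
`y n` (substituted by `t`), with the other levels `y k` fixed and `F (y (N+1)) = 1`. -/
noncomputable def avgPowerFun (F : ℝ → ℝ) (N : ℕ) (y : ℕ → ℝ) (n : ℕ) (t : ℝ) : ℝ :=
  ∑ k ∈ Finset.Icc 1 N,
    ((if k = N then (1:ℝ) else F (if k + 1 = n then t else y (k + 1))) -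
        F (if k = n then t else y k)) /
      (if k = n then t else y k)

/-- Euclidean norm of the gradient of `𝒫` with respect to `y 2, …, y N`
(`y 1` being fixed). -/
noncomputable def gradNormP (F : ℝ → ℝ) (N : ℕ) (y : ℕ → ℝ) : ℝ :=
  Real.sqrt (∑ n ∈ Finset.Icc 2 N, (deriv (avgPowerFun F N y n) (y n)) ^ 2)

lemma avgPower_hasDerivAt (F f : ℝ → ℝ) (N : ℕ) (y : ℕ → ℝ) (n : ℕ)
    (h2 : 2 ≤ n) (hnN : n ≤ N) (hypos : ∀ k, 0 < y k)
    (hF' : HasDerivAt F (f (y n)) (y n)) :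
    HasDerivAt (avgPowerFun F N y n)
      (f (y n) / y (n-1) +
        (-(f (y n)) * y n - ((if n = N then (1:ℝ) else F (y (n+1))) - F (y n))) / (y n)^2)
      (y n) := by
  classical
  set c : ℝ := if n = N then (1:ℝ) else F (y (n+1)) with hc
  set d : ℕ → ℝ := fun k =>
    if k + 1 = n then f (y n) / y k
    else if k = n then (-(f (y n)) * y n - (c - F (y n))) / (y n)^2
    else 0 with hd
  have hsum : HasDerivAt (avgPowerFun F N y n) (∑ k ∈ Finset.Icc 1 N, d k) (y n) := by
    unfold avgPowerFun
    apply HasDerivAt.fun_sum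
    intro k hk
    simp only [Finset.mem_Icc] at hk
    by_cases hk1 : k + 1 = n
    · have hkn : k ≠ n := by omega
      have hkN : k ≠ N := by omega
      have : d k = f (y n) / y k := by simp [hd, hk1]
      rw [this]
      have h1 : HasDerivAt (fun t => ((if k = N then (1:ℝ) else F (if k + 1 = n then t else y (k + 1))) -
          F (if k = n then t else y k)) / (if k = n then t else y k))
          (f (y n) / y k) (y n) := by
        simp only [if_pos hk1, if_neg hkn, if_neg hkN]
        exact ((hF'.sub_const (F (y k))).div_const (y k))
      exact h1
    · by_cases hk2 : k = n
      · have : d k = (-(f (y n)) * y n - (c - F (y n))) / (y n)^2 := by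
          simp [hd, hk1, hk2]
        rw [this]
        have hne : k + 1 ≠ n := hk1
        -- rewrite term
        have h1 : (fun t => ((if k = N then (1:ℝ) else F (if k + 1 = n then t else y (k + 1))) -
            F (if k = n then t else y k)) / (if k = n then t else y k))
            = fun t => (c - F t) / t := by
          funext t
          simp [hk2, hne, hc]
        rw [h1]
        have hd1 : HasDerivAt (fun t : ℝ => c - F t) (-(f (y n))) (y n) := by
          simpa using (hF'.const_sub c)
        have := hd1.fun_div (hasDerivAt_id (y n)) (ne_of_gt (hypos n))
        simpa using this
      · have hdz : d k = 0 := by simp [hd, hk1, hk2]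
        rw [hdz]
        have h1 : (fun t => ((if k = N then (1:ℝ) else F (if k + 1 = n then t else y (k + 1))) -
            F (if k = n then t else y k)) / (if k = n then t else y k))
            = fun _ => ((if k = N then (1:ℝ) else F (y (k + 1))) - F (y k)) / y k := by
          funext t; simp [hk1, hk2]
        rw [h1]
        exact hasDerivAt_const _ _
  have hsum_eq : ∑ k ∈ Finset.Icc 1 N, d k = d (n-1) + d n := by
    have hsub : ({n-1, n} : Finset ℕ) ⊆ Finset.Icc 1 N := by
      intro k hk
      simp only [Finset.mem_insert, Finset.mem_singleton] at hk
      simp only [Finset.mem_Icc]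
      omega
    rw [← Finset.sum_subset hsub]
    · rw [Finset.sum_pair (by omega : n - 1 ≠ n)]
    · intro k hk hk2
      simp only [Finset.mem_insert, Finset.mem_singleton, not_or] at hk2
      have : k + 1 ≠ n := by omega
      simp [hd, this, hk2.2]
  rw [hsum_eq] at hsum
  have h1 : d (n-1) = f (y n) / y (n-1) := by
    have : n - 1 + 1 = n := by omega
    simp [hd, this]
  have h2' : d n = (-(f (y n)) * y n - (c - F (y n))) / (y n)^2 := by
    have : ¬ (n + 1 = n) := by omega
    simp [hd, this]
  rw [h1, h2'] at hsum
  exact hsum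

lemma sqrt_add_le' (x y : ℝ) (hx : 0 ≤ x) (hy : 0 ≤ y) :
    Real.sqrt (x + y) ≤ Real.sqrt x + Real.sqrt y := by
  have h : x + y ≤ (Real.sqrt x + Real.sqrt y)^2 := by
    nlinarith [Real.sq_sqrt hx, Real.sq_sqrt hy, Real.sqrt_nonneg x, Real.sqrt_nonneg y]
  calc Real.sqrt (x + y) ≤ Real.sqrt ((Real.sqrt x + Real.sqrt y)^2) := Real.sqrt_le_sqrt h
    _ = Real.sqrt x + Real.sqrt y := Real.sqrt_sq (by positivity)

lemma lip_of_deriv (f f' : ℝ → ℝ) (μ : ℝ)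
    (hfder : ∀ x ∈ Ioi (0:ℝ), HasDerivAt f (f' x) x)
    (hf'bd : ∀ x ∈ Ioi (0:ℝ), |f' x| ≤ μ) :
    ∀ s ∈ Ioi (0:ℝ), ∀ t ∈ Ioi (0:ℝ), |f t - f s| ≤ μ * |t - s| := by
  intro s hs t ht
  have := (convex_Ioi (0:ℝ)).norm_image_sub_le_of_norm_hasDerivWithin_le
    (f := f) (f' := f') (fun x hx => (hfder x hx).hasDerivWithinAt)
    (fun x hx => by simpa [Real.norm_eq_abs] using hf'bd x hx) hs ht
  simpa [Real.norm_eq_abs] using this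

lemma F_diff (f F : ℝ → ℝ) (hfint : IntegrableOn f (Ioi 0))
    (hF : ∀ x, F x = ∫ t in Ioc (0:ℝ) x, f t)
    {A B : ℝ} (hA : 0 < A) (hAB : A ≤ B) :
    F B - F A = ∫ t in Ioc A B, f t := by
  have hu : Ioc (0:ℝ) A ∪ Ioc A B = Ioc 0 B := Ioc_union_Ioc_eq_Ioc (le_of_lt hA) hAB
  have hdisj : Disjoint (Ioc (0:ℝ) A) (Ioc A B) := Ioc_disjoint_Ioc_of_le le_rfl
  have h1 : IntegrableOn f (Ioc (0:ℝ) A) := hfint.mono_set Ioc_subset_Ioi_self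
  have h2 : IntegrableOn f (Ioc A B) := hfint.mono_set (fun x hx => lt_trans hA hx.1)
  have := setIntegral_union hdisj measurableSet_Ioc h1 h2 (f := f)
  rw [hu] at this
  rw [hF, hF, this]; ring

lemma one_sub_F (f F : ℝ → ℝ) (hfint : IntegrableOn f (Ioi 0))
    (hfone : ∫ x in Ioi (0:ℝ), f x = 1)
    (hF : ∀ x, F x = ∫ t in Ioc (0:ℝ) x, f t)
    {A : ℝ} (hA : 0 < A) :
    1 - F A = ∫ t in Ioi A, f t := by
  have hu : Ioc (0:ℝ) A ∪ Ioi A = Ioi 0 := Ioc_union_Ioi_eq_Ioi (le_of_lt hA)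
  have hdisj : Disjoint (Ioc (0:ℝ) A) (Ioi A) := by
    rw [Set.disjoint_left]; intro x hx hx2; exact absurd hx.2 (not_le.mpr hx2)
  have h1 : IntegrableOn f (Ioc (0:ℝ) A) := hfint.mono_set Ioc_subset_Ioi_self
  have h2 : IntegrableOn f (Ioi A) := hfint.mono_set (Ioi_subset_Ioi (le_of_lt hA))
  have := setIntegral_union hdisj measurableSet_Ioi h1 h2 (f := f)
  rw [hu, hfone] at this
  rw [hF]; linarith

lemma int_linear (μ A B : ℝ) (hAB : A ≤ B) :
    ∫ t in Ioc A B, μ * (t - A) = μ * (B - A)^2 / 2 := by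
  rw [← intervalIntegral.integral_of_le hAB]
  have h1 : ∫ t in A..B, μ * (t - A) = μ * ∫ t in A..B, (t - A) := by
    exact intervalIntegral.integral_const_mul μ _
  rw [h1]
  have h2 : ∫ t in A..B, (t - A) = (∫ t in A..B, t) - ∫ t in A..B, (A:ℝ) := by
    exact intervalIntegral.integral_sub intervalIntegral.intervalIntegrable_id
      (intervalIntegrable_const (c := (A:ℝ)))
  rw [h2, integral_id, intervalIntegral.integral_const]
  simp only [smul_eq_mul]; ring

lemma int_bound (f f' : ℝ → ℝ) (μ : ℝ)
    (hfder : ∀ x ∈ Ioi (0:ℝ), HasDerivAt f (f' x) x)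
    (hf'bd : ∀ x ∈ Ioi (0:ℝ), |f' x| ≤ μ)
    (hfint : IntegrableOn f (Ioi 0))
    {A B : ℝ} (hA : 0 < A) (hAB : A ≤ B) :
    |∫ t in Ioc A B, (f A - f t)| ≤ μ * (B - A)^2 / 2 := by
  have hlip := lip_of_deriv f f' μ hfder hf'bd
  have hint2 : IntegrableOn f (Ioc A B) := hfint.mono_set (fun x hx => lt_trans hA hx.1)
  have hint1 : IntegrableOn (fun t => f A - f t) (Ioc A B) :=
    (integrableOn_const measure_Ioc_lt_top.ne enorm_ne_top).sub hint2
  calc |∫ t in Ioc A B, (f A - f t)| ≤ ∫ t in Ioc A B, |f A - f t| := by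
        simpa [Real.norm_eq_abs] using
          norm_integral_le_integral_norm (f := fun t => f A - f t)
            (μ := volume.restrict (Ioc A B))
    _ ≤ ∫ t in Ioc A B, μ * (t - A) := by
        apply setIntegral_mono_on hint1.abs
          ((continuous_const.mul (continuous_id.sub continuous_const)).integrableOn_Ioc)
          measurableSet_Ioc
        intro t ht
        rw [abs_sub_comm]
        calc |f t - f A| ≤ μ * |t - A| :=
              hlip A hA t (lt_trans hA ht.1)
          _ = μ * (t - A) := by rw [abs_of_pos (by linarith [ht.1])]
    _ = μ * (B - A)^2 / 2 := int_linear μ A B hAB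

/-- Lemma 1: gradient bound for the geometric codebook. -/
theorem stmt2
    (f f' F : ℝ → ℝ) (μ : ℝ) (hμ : 0 < μ)
    (hfpos : ∀ x ∈ Ioi (0:ℝ), 0 < f x)
    (hfder : ∀ x ∈ Ioi (0:ℝ), HasDerivAt f (f' x) x)
    (hf'bd : ∀ x ∈ Ioi (0:ℝ), |f' x| ≤ μ)
    (hfint : IntegrableOn f (Ioi 0))
    (hfone : ∫ x in Ioi (0:ℝ), f x = 1)
    (hF : ∀ x, F x = ∫ t in Ioc (0:ℝ) x, f t)
    (hF' : ∀ x ∈ Ioi (0:ℝ), HasDerivAt F (f x) x)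
    (a r : ℝ) (ha : 0 < a) (hr : 1 < r)
    (N : ℕ) (hN : 3 ≤ N) :
    gradNormP F N (quantLevels a r) ≤
      1 / 2 * μ * Real.sqrt N * (r - 1) ^ 2 +
        |1 / (quantLevels a r N) ^ 2 *
          ((r - 1) * quantLevels a r N * f (quantLevels a r N) -
            ∫ t in Ioi (quantLevels a r N), f t)| := by
  classical
  set y := quantLevels a r with hydef
  have hrpos : (0:ℝ) < r := lt_trans one_pos hr
  have hypos : ∀ k, 0 < y k := fun k => mul_pos ha (pow_pos hrpos _)
  have hysucc : ∀ n, 1 ≤ n → y (n+1) = r * y n := by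
    intro n h
    simp only [hydef, quantLevels]
    rw [show n + 1 - 1 = (n - 1) + 1 by omega, pow_succ]
    ring
  set p : ℕ → ℝ := fun n =>
    f (y n) * (r-1) / y n - ((if n = N then (1:ℝ) else F (y (n+1))) - F (y n)) / (y n)^2
    with hp
  have hderiv : ∀ n, 2 ≤ n → n ≤ N → deriv (avgPowerFun F N y n) (y n) = p n := by
    intro n h2 hnN
    have h := avgPower_hasDerivAt F f N y n h2 hnN hypos (hF' (y n) (hypos n))
    rw [h.deriv]
    have hyr : y n = r * y (n-1) := by
      have := hysucc (n-1) (by omega)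
      rwa [show n-1+1 = n by omega] at this
    have h0 : y (n-1) ≠ 0 := ne_of_gt (hypos _)
    have h0' : y n ≠ 0 := ne_of_gt (hypos n)
    have e1 : f (y n) / y (n - 1) = f (y n) * r / y n := by
      rw [hyr]
      field_simp
    show f (y n) / y (n - 1) +
        (-(f (y n)) * y n - ((if n = N then (1:ℝ) else F (y (n+1))) - F (y n))) / (y n)^2
      = f (y n) * (r-1) / y n - ((if n = N then (1:ℝ) else F (y (n+1))) - F (y n)) / (y n)^2
    generalize (if n = N then (1:ℝ) else F (y (n+1))) = C
    rw [e1]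
    field_simp
    ring
  set B : ℝ := μ * (r-1)^2 / 2 with hB
  have hBnn : 0 ≤ B := by
    have : (0:ℝ) ≤ (r-1)^2 := sq_nonneg _
    positivity
  -- bound for 2 ≤ n ≤ N-1
  have hbound : ∀ n, 2 ≤ n → n ≤ N - 1 → |p n| ≤ B := by
    intro n h2 hn1
    have hnN : n ≠ N := by omega
    have hA : 0 < y n := hypos n
    have hstep : y (n+1) = r * y n := hysucc n (by omega)
    have hAB : y n ≤ y (n+1) := by nlinarith
    have hdiff : F (y (n+1)) - F (y n) = ∫ t in Ioc (y n) (y (n+1)), f t :=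
      F_diff f F hfint hF hA hAB
    have hint2 : IntegrableOn f (Ioc (y n) (y (n+1))) :=
      hfint.mono_set (fun x hx => lt_trans hA hx.1)
    have hintc : IntegrableOn (fun _ : ℝ => f (y n)) (Ioc (y n) (y (n+1))) :=
      integrableOn_const measure_Ioc_lt_top.ne enorm_ne_top
    have hkey : p n = (∫ t in Ioc (y n) (y (n+1)), (f (y n) - f t)) / (y n)^2 := by
      rw [hp]
      simp only [if_neg hnN]
      rw [integral_sub hintc hint2, setIntegral_const, smul_eq_mul, hdiff,
        Real.volume_real_Ioc_of_le hAB]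
      rw [hstep]
      field_simp
    have habs : |∫ t in Ioc (y n) (y (n+1)), (f (y n) - f t)| ≤ μ * (y (n+1) - y n)^2 / 2 :=
      int_bound f f' μ hfder hf'bd hfint hA hAB
    rw [hkey, abs_div, abs_of_pos (by positivity : (0:ℝ) < (y n)^2), hB]
    rw [div_le_iff₀ (by positivity : (0:ℝ) < (y n)^2)]
    have h1 : y (n+1) - y n = (r - 1) * y n := by rw [hstep]; ring
    rw [h1] at habs
    nlinarith [habs, sq_nonneg (y n)]
  -- formula for p N
  have hpN : p N = 1 / (y N) ^ 2 *
      ((r - 1) * y N * f (y N) - ∫ t in Ioi (y N), f t) := by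
    rw [hp]
    simp only [if_pos rfl, eq_self_iff_true, if_true]
    have h1 : (1:ℝ) - F (y N) = ∫ t in Ioi (y N), f t :=
      one_sub_F f F hfint hfone hF (hypos N)
    rw [← h1]
    have h0 : y N ≠ 0 := ne_of_gt (hypos N)
    field_simp
  -- assemble
  unfold gradNormP
  have hsumeq : ∑ n ∈ Finset.Icc 2 N, (deriv (avgPowerFun F N y n) (y n))^2
      = ∑ n ∈ Finset.Icc 2 N, (p n)^2 := by
    apply Finset.sum_congr rfl
    intro n hn
    simp only [Finset.mem_Icc] at hn
    rw [hderiv n hn.1 hn.2]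
  rw [hsumeq]
  have hins : Finset.Icc 2 N = insert N (Finset.Icc 2 (N-1)) := by
    ext k; simp only [Finset.mem_Icc, Finset.mem_insert]; omega
  have hnotmem : N ∉ Finset.Icc 2 (N-1) := by simp only [Finset.mem_Icc]; omega
  rw [hins, Finset.sum_insert hnotmem, add_comm]
  have hS : 0 ≤ ∑ n ∈ Finset.Icc 2 (N-1), (p n)^2 :=
    Finset.sum_nonneg (fun n _ => sq_nonneg _)
  calc Real.sqrt ((∑ n ∈ Finset.Icc 2 (N-1), (p n)^2) + (p N)^2)
      ≤ Real.sqrt (∑ n ∈ Finset.Icc 2 (N-1), (p n)^2) + Real.sqrt ((p N)^2) :=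
        sqrt_add_le' _ _ hS (sq_nonneg _)
    _ ≤ Real.sqrt N * B + |p N| := by
        rw [Real.sqrt_sq_eq_abs]
        apply add_le_add_left
        have hsum_le : ∑ n ∈ Finset.Icc 2 (N-1), (p n)^2 ≤ (N:ℝ) * B^2 := by
          calc ∑ n ∈ Finset.Icc 2 (N-1), (p n)^2
              ≤ ∑ n ∈ Finset.Icc 2 (N-1), B^2 := by
                apply Finset.sum_le_sum
                intro n hn
                simp only [Finset.mem_Icc] at hn
                have := hbound n hn.1 hn.2
                calc (p n)^2 = |p n|^2 := (sq_abs _).symm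
                  _ ≤ B^2 := pow_le_pow_left₀ (abs_nonneg _) this 2
            _ = ((N-1+1-2 : ℕ) : ℝ) * B^2 := by
                rw [Finset.sum_const, Nat.card_Icc]; simp [nsmul_eq_mul]
            _ ≤ (N:ℝ) * B^2 := by
                apply mul_le_mul_of_nonneg_right _ (sq_nonneg _)
                exact_mod_cast Nat.le_of_lt_succ (by omega)
        calc Real.sqrt (∑ n ∈ Finset.Icc 2 (N-1), (p n)^2)
            ≤ Real.sqrt ((N:ℝ) * B^2) := Real.sqrt_le_sqrt hsum_le
          _ = Real.sqrt N * B := by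
              rw [Real.sqrt_mul (Nat.cast_nonneg N), Real.sqrt_sq hBnn]
    _ = 1 / 2 * μ * Real.sqrt N * (r - 1) ^ 2 + |p N| := by rw [hB]; ring
    _ = _ := by rw [hpN]
end

section
/- Fix a real constant c with 0 < c < ∞. For each integer n ≥ 2, let L_c(n) be the unique positive solution of L·(1+L)^{n−1} = c, and define ζ_c(n) = −log₂(L_c(n))/log₂(n), i.e., L_c(n) = n^{−ζ_c(n)}. Then lim_{n→∞} ζ_c(n) = 1. -/
open Filter

private lemma stmt4_mono (k : ℕ) {x y : ℝ} (hx : 0 < x) (hxy : x < y) :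
    x * (1 + x) ^ k < y * (1 + y) ^ k := by
  have h1 : (0:ℝ) < (1 + x) ^ k := pow_pos (by linarith) _
  have h2 : (1 + x) ^ k ≤ (1 + y) ^ k := pow_le_pow_left₀ (by linarith) (by linarith) _
  calc x * (1 + x) ^ k < y * (1 + x) ^ k := by nlinarith
    _ ≤ y * (1 + y) ^ k := by nlinarith

/-- if `L c n` is the unique positive solution of
`L·(1+L)^(n-1) = c` and `ζ n = −log₂(L n)/log₂ n`, then `ζ n → 1` as `n → ∞`. -/
theorem stmt4 (c : ℝ) (hc : 0 < c) (L : ℕ → ℝ)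
    (hL : ∀ n : ℕ, 2 ≤ n → 0 < L n ∧ L n * (1 + L n) ^ (n - 1) = c) :
    Tendsto (fun n : ℕ => -Real.logb 2 (L n) / Real.logb 2 n) atTop (nhds 1) := by
  rw [Metric.tendsto_nhds]
  intro ε hε
  set δ : ℝ := min (ε / 2) (1 / 2) with hδdef
  have hδ0 : 0 < δ := lt_min (by linarith) (by norm_num)
  have hδ1 : δ < 1 := lt_of_le_of_lt (min_le_right _ _) (by norm_num)
  have hδε : δ < ε := lt_of_le_of_lt (min_le_left _ _) (by linarith)
  -- bounds from monotonicity
  have hlow : ∀ n : ℕ, 2 ≤ n → ∀ x : ℝ, 0 < x → x * (1 + x) ^ (n - 1) ≤ c → x ≤ L n := by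
    intro n hn x hx hxc
    by_contra h
    push_neg at h
    have h2 := (hL n hn).2
    have := stmt4_mono (n - 1) (hL n hn).1 h
    linarith
  have hhigh : ∀ n : ℕ, 2 ≤ n → ∀ y : ℝ, 0 < y → c ≤ y * (1 + y) ^ (n - 1) → L n ≤ y := by
    intro n hn y hy hyc
    by_contra h
    push_neg at h
    have h2 := (hL n hn).2
    have := stmt4_mono (n - 1) hy h
    linarith
  -- eventual lower bound : n ^ (-(1+δ)) ≤ L n
  have hevlow : ∀ᶠ n : ℕ in atTop, (n : ℝ) ^ (-(1 + δ)) ≤ L n := by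
    have h3n : ∀ᶠ n : ℕ in atTop, 3 / (n : ℝ) < c := by
      have : Tendsto (fun n : ℕ => 3 / (n : ℝ)) atTop (nhds 0) :=
        tendsto_const_nhds.div_atTop tendsto_natCast_atTop_atTop
      exact this.eventually_lt_const hc
    filter_upwards [h3n, eventually_ge_atTop 2] with n h3 hn2
    have hn0 : (0:ℝ) < (n : ℝ) := by positivity
    have hn1 : (1:ℝ) ≤ (n : ℝ) := by exact_mod_cast Nat.one_le_of_lt hn2
    set x : ℝ := (n : ℝ) ^ (-(1 + δ)) with hxdef
    have hx0 : 0 < x := Real.rpow_pos_of_pos hn0 _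
    apply hlow n hn2 x hx0
    -- x ≤ 1/n
    have hx1 : x ≤ (n : ℝ) ^ (-1 : ℝ) :=
      Real.rpow_le_rpow_of_exponent_le hn1 (by linarith)
    -- (1+x)^(n-1) ≤ exp ((n-1)*x) ≤ exp 1 ≤ 3
    have hpow : (1 + x) ^ (n - 1) ≤ Real.exp ((n - 1 : ℕ) * x) := by
      calc (1 + x) ^ (n - 1) ≤ (Real.exp x) ^ (n - 1) :=
            pow_le_pow_left₀ (by linarith) (by linarith [Real.add_one_le_exp x]) _
        _ = Real.exp ((n - 1 : ℕ) * x) := by rw [← Real.exp_nat_mul]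
    have hnx : ((n - 1 : ℕ) : ℝ) * x ≤ 1 := by
      have h1 : ((n - 1 : ℕ) : ℝ) ≤ (n : ℝ) := by exact_mod_cast Nat.sub_le n 1
      have h2 : (n : ℝ) * x ≤ 1 := by
        have heq : (n : ℝ) * x = (n : ℝ) ^ (-δ) := by
          rw [hxdef, show -δ = 1 + (-(1+δ)) by ring, Real.rpow_add hn0, Real.rpow_one]
        rw [heq]
        exact Real.rpow_le_one_of_one_le_of_nonpos hn1 (by linarith)
      nlinarith
    have hexp3 : Real.exp ((n - 1 : ℕ) * x) ≤ 3 := by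
      calc Real.exp ((n - 1 : ℕ) * x) ≤ Real.exp 1 := Real.exp_le_exp.2 hnx
        _ ≤ 3 := by linarith [Real.exp_one_lt_d9]
    calc x * (1 + x) ^ (n - 1) ≤ (n:ℝ)^(-1:ℝ) * 3 := by
          apply mul_le_mul hx1 (le_trans hpow hexp3) (by positivity) (by positivity)
      _ = 3 / (n:ℝ) := by rw [Real.rpow_neg_one]; ring
      _ ≤ c := h3.le
  -- eventual upper bound : L n ≤ n ^ (δ - 1)
  have hevhigh : ∀ᶠ n : ℕ in atTop, L n ≤ (n : ℝ) ^ (δ - 1) := by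
    -- log n = o(n^δ)
    have hlo : ∀ᶠ n : ℕ in atTop, (1 - δ) * Real.log n + Real.log c ≤ (n : ℝ) ^ δ / 4 := by
      have h1 : Tendsto (fun n : ℕ => Real.log n / (n:ℝ) ^ δ) atTop (nhds 0) := by
        have := (isLittleO_log_rpow_atTop hδ0).tendsto_div_nhds_zero
        exact this.comp tendsto_natCast_atTop_atTop
      have h2 : ∀ᶠ n : ℕ in atTop, Real.log n / (n:ℝ) ^ δ ≤ 1 / 8 := by
        exact h1.eventually_le_const (show (0:ℝ) < 1/8 by norm_num)
      have h3 : Tendsto (fun n : ℕ => (n:ℝ) ^ δ) atTop atTop :=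
        (tendsto_rpow_atTop hδ0).comp tendsto_natCast_atTop_atTop
      have h4 : ∀ᶠ n : ℕ in atTop, 8 * Real.log c ≤ (n:ℝ) ^ δ := h3.eventually_ge_atTop _
      filter_upwards [h2, h4, eventually_ge_atTop 1] with n ha hb hn1
      have hn0 : (0:ℝ) < (n:ℝ) := by exact_mod_cast hn1
      have hp0 : (0:ℝ) < (n:ℝ) ^ δ := Real.rpow_pos_of_pos hn0 _
      have ha' : Real.log n ≤ (n:ℝ) ^ δ / 8 := by
        rw [div_le_div_iff₀ hp0 (by norm_num)] at ha; linarith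
      have hlogn : 0 ≤ Real.log n := Real.log_natCast_nonneg n
      nlinarith
    filter_upwards [hlo, eventually_ge_atTop 2] with n hcond hn2
    have hn0 : (0:ℝ) < (n : ℝ) := by positivity
    have hn1 : (1:ℝ) ≤ (n : ℝ) := by exact_mod_cast Nat.one_le_of_lt hn2
    set y : ℝ := (n : ℝ) ^ (δ - 1) with hydef
    have hy0 : 0 < y := Real.rpow_pos_of_pos hn0 _
    have hy1 : y ≤ 1 :=
      calc y ≤ (n:ℝ) ^ (0:ℝ) := Real.rpow_le_rpow_of_exponent_le hn1 (by linarith)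
        _ = 1 := Real.rpow_zero _
    apply hhigh n hn2 y hy0
    -- log(1+y) ≥ y/2
    have hlog : y / 2 ≤ Real.log (1 + y) := by
      have h1 : Real.log (1 / (1 + y)) ≤ 1 / (1 + y) - 1 :=
        Real.log_le_sub_one_of_pos (by positivity)
      rw [Real.log_div one_ne_zero (by positivity), Real.log_one] at h1
      have h2 : 1 / (1 + y) - 1 = -(y / (1 + y)) := by field_simp; ring
      have h3 : y / 2 ≤ y / (1 + y) := by
        apply div_le_div_of_nonneg_left hy0.le (by positivity) (by linarith)
      linarith
    -- (1+y)^(n-1) = exp((n-1) log(1+y)) ≥ exp((n-1) y/2) ≥ exp(n^δ/4)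
    have hkey : ((n - 1 : ℕ) : ℝ) * (y / 2) ≥ (n:ℝ) ^ δ / 4 := by
      have h1 : ((n - 1 : ℕ) : ℝ) = (n : ℝ) - 1 := by
        rw [Nat.cast_sub (by omega)]; norm_num
      have h2 : (n : ℝ) - 1 ≥ (n : ℝ) / 2 := by
        have : (2:ℝ) ≤ (n:ℝ) := by exact_mod_cast hn2
        linarith
      have h3 : (n:ℝ) * y = (n:ℝ) ^ δ := by
        have h := Real.rpow_add hn0 1 (δ - 1)
        rw [Real.rpow_one, show (1:ℝ) + (δ - 1) = δ by ring] at h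
        rw [hydef, ← h]
      nlinarith
    have hpow : Real.exp ((n:ℝ) ^ δ / 4) ≤ (1 + y) ^ (n - 1) := by
      calc Real.exp ((n:ℝ) ^ δ / 4) ≤ Real.exp (((n - 1 : ℕ) : ℝ) * (y / 2)) :=
            Real.exp_le_exp.2 hkey
        _ ≤ Real.exp (((n - 1 : ℕ) : ℝ) * Real.log (1 + y)) := by
            apply Real.exp_le_exp.2
            apply mul_le_mul_of_nonneg_left hlog (by positivity)
        _ = (1 + y) ^ (n - 1) := by
            rw [Real.exp_nat_mul, Real.exp_log (by linarith)]
    calc c = Real.exp (Real.log c) := (Real.exp_log hc).symm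
      _ ≤ Real.exp ((δ - 1) * Real.log n + (n:ℝ) ^ δ / 4) := by
          apply Real.exp_le_exp.2; linarith
      _ = y * Real.exp ((n:ℝ) ^ δ / 4) := by
          rw [Real.exp_add]
          congr 1
          rw [hydef, Real.rpow_def_of_pos hn0, mul_comm]
      _ ≤ y * (1 + y) ^ (n - 1) := by
          apply mul_le_mul_of_nonneg_left hpow hy0.le
  -- conclude
  filter_upwards [hevlow, hevhigh, eventually_ge_atTop 2] with n hl hh hn2
  have hn0 : (0:ℝ) < (n : ℝ) := by positivity
  have hn2' : (2:ℝ) ≤ (n:ℝ) := by exact_mod_cast hn2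
  have hlogn : 0 < Real.log n := Real.log_pos (by linarith)
  have hLpos : 0 < L n := (hL n hn2).1
  have hlogL1 : -(1 + δ) * Real.log n ≤ Real.log (L n) := by
    have := Real.log_le_log (Real.rpow_pos_of_pos hn0 _) hl
    rwa [Real.log_rpow hn0] at this
  have hlogL2 : Real.log (L n) ≤ (δ - 1) * Real.log n := by
    have := Real.log_le_log hLpos hh
    rwa [Real.log_rpow hn0] at this
  have hl2 : Real.log 2 ≠ 0 := ne_of_gt (Real.log_pos one_lt_two)
  have heq : -Real.logb 2 (L n) / Real.logb 2 n = -Real.log (L n) / Real.log n := by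
    rw [Real.logb, Real.logb]
    field_simp
  rw [heq, Real.dist_eq]
  have h1 : -Real.log (L n) / Real.log n ≤ 1 + δ := by
    rw [div_le_iff₀ hlogn]; nlinarith
  have h2 : 1 - δ ≤ -Real.log (L n) / Real.log n := by
    rw [le_div_iff₀ hlogn]; nlinarith
  rw [abs_lt]
  constructor <;> nlinarith
end

section
/- (Theorem 1) Let f be a positive differentiable probability density on (0,∞) with cumulative distribution function F, satisfying the regularity conditions: sup_{y>0} |f'(y)| ≤ μ for some μ > 0; the limit η = lim_{y→∞} (−f(y)/f'(y)) exists with 0 < η < ∞; ∫_0^∞ y f(y) dy < ∞; and lim_{y→∞} y·f(y) = 0. Fix a > 0. For each integer N ≥ 3, let L_{η/a}(N) be the unique positive solution of L·(1+L)^{N−1} = η/a, set ζ_{η/a}(N) = −log₂(L_{η/a}(N))/log₂(N), set r* = 1 + L_{η/a}(N), and take the geometric codebook y_n = a·(r*)^{n−1}, 1 ≤ n ≤ N. Define 𝒫 = Σ_{n=1}^{N} (F(y_{n+1}) − F(y_n))/y_n with y_{N+1} = ∞, as a function of y_2,...,y_N with y_1 = a fixed, and let ‖∇𝒫(N)‖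 denote the Euclidean norm of its gradient at this codebook. Then there exists a function E : ℕ → ℝ such that for all N ≥ 3, ‖∇𝒫(N)‖ ≤ (1/2)·μ·N^{−(2ζ_{η/a}(N) − 1/2)} + E(N), and for every ε > 0, N^{3−ε}·E(N) → 0 as N → ∞. -/
open MeasureTheory Set Filter

set_option maxHeartbeats 1000000

lemma deriv_avgPower (F fd : ℝ → ℝ) (N n : ℕ) (y : ℕ → ℝ)
    (hn2 : 2 ≤ n) (hnN : n ≤ N) (hy : ∀ k, 0 < y k)
    (hF' : ∀ x ∈ Ioi (0:ℝ), HasDerivAt F (fd x) x) :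
    deriv (avgPowerFun F N y n) (y n) =
      fd (y n) / y (n-1) +
        (-(fd (y n)) * y n - ((if n = N then (1:ℝ) else F (y (n+1))) - F (y n))) / (y n)^2 := by
  set x := y n with hx
  have hx0 : 0 < x := hy n
  set C : ℝ := if n = N then (1:ℝ) else F (y (n+1)) with hC
  set D : ℕ → ℝ := fun k =>
    if k = n - 1 then fd x / y (n-1)
    else if k = n then (-(fd x) * x - (C - F x)) / x^2
    else 0 with hD
  have key : ∀ k ∈ Finset.Icc 1 N, HasDerivAt
      (fun t => ((if k = N then (1:ℝ) else F (if k + 1 = n then t else y (k + 1))) -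
        F (if k = n then t else y k)) / (if k = n then t else y k)) (D k) x := by
    intro k hk
    simp only [Finset.mem_Icc] at hk
    rcases eq_or_ne k (n-1) with hk1 | hk1
    · -- k = n - 1
      have hkn : k ≠ n := by omega
      have hkN : k ≠ N := by omega
      have hk1' : k + 1 = n := by omega
      simp only [hk1', if_pos, if_neg hkn, if_neg hkN, hD, if_pos hk1]
      have := ((hF' x hx0).sub_const (F (y k))).div_const (y k)
      subst hk1
      exact this
    · rcases eq_or_ne k n with hkn | hkn
      · -- k = n
        have hk1' : ¬ (k + 1 = n) := by omega
        subst hkn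
        simp only [if_neg hk1', if_pos, hD, if_neg hk1]
        have h1 : HasDerivAt (fun t : ℝ => (if k = N then (1:ℝ) else F (y (k+1))) - F t)
            (-(fd x)) x := by
          simpa using ((hF' x hx0).const_sub (if k = N then (1:ℝ) else F (y (k+1))))
        have h2 := h1.fun_div (hasDerivAt_id x) (ne_of_gt hx0)
        simp only [id_eq] at h2
        rw [hC]
        exact h2.congr_deriv (by ring)
      · -- other k : constant
        have hk1' : ¬ (k + 1 = n) := by omega
        simp only [if_neg hk1', if_neg hkn, hD, if_neg hk1]
        exact hasDerivAt_const x _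
  have hsum : HasDerivAt (avgPowerFun F N y n) (∑ k ∈ Finset.Icc 1 N, D k) x :=
    HasDerivAt.fun_sum key
  have hDsum : ∑ k ∈ Finset.Icc 1 N, D k = D (n-1) + D n := by
    rw [← Finset.sum_pair (show n - 1 ≠ n by omega)]
    refine (Finset.sum_subset ?_ ?_).symm
    · intro k hk
      simp only [Finset.mem_insert, Finset.mem_singleton] at hk
      simp only [Finset.mem_Icc]; omega
    · intro k _ hk
      simp only [Finset.mem_insert, Finset.mem_singleton, not_or] at hk
      simp only [hD, if_neg hk.1, if_neg hk.2]
  rw [hsum.deriv, hDsum]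
  simp only [hD, if_pos, if_neg (show n ≠ n - 1 by omega)]


lemma rpow_ident (N : ℕ) (hN : 3 ≤ N) (l : ℝ) (hl : 0 < l) :
    (N : ℝ) ^ (-(2 * (-Real.logb 2 l / Real.logb 2 N) - 1 / 2)) =
      Real.sqrt N * l ^ 2 := by
  have hN0 : (0:ℝ) < N := by positivity
  have hlogN : Real.log N ≠ 0 := by
    have : (1:ℝ) < N := by exact_mod_cast (by omega : 1 < N)
    exact ne_of_gt (Real.log_pos this)
  have hlog2 : Real.log 2 ≠ 0 := by
    exact ne_of_gt (Real.log_pos one_lt_two)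
  have hexp : (-(2 * (-Real.logb 2 l / Real.logb 2 N) - 1 / 2))
      = 2 * Real.log l / Real.log N + 1/2 := by
    simp only [Real.logb]
    field_simp
    ring
  rw [hexp, Real.rpow_add hN0, Real.rpow_def_of_pos hN0 (2 * Real.log l / Real.log N)]
  have h1 : Real.log (N:ℝ) * (2 * Real.log l / Real.log N) = 2 * Real.log l := by
    field_simp
  have hexp2 : Real.exp (2 * Real.log l) = l ^ 2 := by
    rw [show 2 * Real.log l = Real.log l + Real.log l by ring, Real.exp_add, Real.exp_log hl]
    ring
  rw [h1, hexp2, ← Real.sqrt_eq_rpow]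
  ring

lemma taylorF (f f' F : ℝ → ℝ) (μ : ℝ)
    (hfder : ∀ x ∈ Ioi (0:ℝ), HasDerivAt f (f' x) x)
    (hf'bd : ∀ x ∈ Ioi (0:ℝ), |f' x| ≤ μ)
    (hfint : IntegrableOn f (Ioi 0))
    (hF : ∀ x, F x = ∫ t in Ioc (0:ℝ) x, f t)
    (p q : ℝ) (hp : 0 < p) (hpq : p ≤ q) :
    |F q - F p - f p * (q - p)| ≤ μ * (q - p)^2 / 2 := by
  have hq : 0 < q := lt_of_lt_of_le hp hpq
  -- F q - F p = ∫ t in p..q, f t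
  have hsplit : F q - F p = ∫ t in p..q, f t := by
    rw [hF q, hF p, intervalIntegral.integral_of_le hpq]
    have hU : Ioc (0:ℝ) p ∪ Ioc p q = Ioc 0 q := Ioc_union_Ioc_eq_Ioc hp.le hpq
    have hdisj : Disjoint (Ioc (0:ℝ) p) (Ioc p q) := Ioc_disjoint_Ioc_of_le le_rfl
    have h1 : IntegrableOn f (Ioc 0 p) := hfint.mono_set (Ioc_subset_Ioi_self)
    have h2 : IntegrableOn f (Ioc p q) := hfint.mono_set
      (fun x hx => lt_trans hp hx.1)
    rw [← hU, setIntegral_union hdisj measurableSet_Ioc h1 h2]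
    ring
  -- interval integrability
  have hsub : uIcc p q ⊆ Ioi (0:ℝ) := by
    rw [uIcc_of_le hpq]
    exact fun x hx => lt_of_lt_of_le hp hx.1
  have hfi : IntervalIntegrable f volume p q :=
    (hfint.mono_set (by
      intro x hx
      exact lt_of_lt_of_le hp ((uIcc_of_le hpq ▸ hx).1) )).intervalIntegrable
  -- MVT bound on f
  have hMVT : ∀ t ∈ Icc p q, |f t - f p| ≤ μ * (t - p) := by
    intro t ht
    have := Convex.norm_image_sub_le_of_norm_hasDerivWithin_le
      (f := f) (f' := f') (s := Icc p q)
      (fun x hx => (hfder x (lt_of_lt_of_le hp hx.1)).hasDerivWithinAt)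
      (fun x hx => by
        simpa using hf'bd x (lt_of_lt_of_le hp hx.1))
      (convex_Icc p q) (left_mem_Icc.2 hpq) ht
    simpa [abs_of_nonneg (sub_nonneg.2 ht.1)] using this
  have hconst : f p * (q - p) = ∫ _ in p..q, f p := by
    simp [mul_comm]
  rw [hsplit, hconst, ← intervalIntegral.integral_sub hfi intervalIntegrable_const]
  calc |∫ t in p..q, (f t - f p)| ≤ ∫ t in p..q, |f t - f p| :=
        intervalIntegral.abs_integral_le_integral_abs hpq
    _ ≤ ∫ t in p..q, μ * (t - p) := by
        apply intervalIntegral.integral_mono_on hpq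
        · exact (hfi.sub intervalIntegrable_const).abs
        · exact (continuous_const.mul (continuous_id.sub continuous_const)).intervalIntegrable p q
        · exact hMVT
    _ = μ * (q - p)^2 / 2 := by
        rw [intervalIntegral.integral_const_mul]
        have : ∫ t in p..q, (t - p) = (q - p)^2/2 := by
          have : (fun t : ℝ => t - p) = fun t => id t - p := rfl
          rw [this, intervalIntegral.integral_sub (continuous_id.intervalIntegrable p q)
            intervalIntegrable_const]
          simp only [id_eq, integral_id, intervalIntegral.integral_const, smul_eq_mul]
          ring
        rw [this]; ring

lemma decayF (f f' F : ℝ → ℝ) (μ η : ℝ) (hη0 : 0 < η)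
    (hfpos : ∀ x ∈ Ioi (0:ℝ), 0 < f x)
    (hfder : ∀ x ∈ Ioi (0:ℝ), HasDerivAt f (f' x) x)
    (hfint : IntegrableOn f (Ioi 0))
    (hfone : ∫ x in Ioi (0:ℝ), f x = 1)
    (hηlim : Tendsto (fun y : ℝ => -f y / f' y) atTop (nhds η))
    (hF : ∀ x, F x = ∫ t in Ioc (0:ℝ) x, f t) :
    ∃ T c : ℝ, 1 ≤ T ∧ 0 < c ∧
      (∀ y, T ≤ y → f y ≤ c * Real.exp (-(y / (2*η)))) ∧
      (∀ y, T ≤ y → 0 ≤ 1 - F y ∧ 1 - F y ≤ 2*η*c * Real.exp (-(y / (2*η)))) := by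
  -- eventually -f/f' ∈ (η/2, 2η)
  have hev : ∀ᶠ y in atTop, η/2 < -f y / f' y ∧ -f y / f' y < 2*η := by
    filter_upwards [hηlim.eventually (Ioo_mem_nhds (show η/2 < η by linarith) (show η < 2*η by linarith))] with y hy
    exact ⟨hy.1, hy.2⟩
  obtain ⟨T₀, hT₀⟩ := eventually_atTop.1 hev
  set T := max T₀ 1 with hT
  have hT1 : (1:ℝ) ≤ T := le_max_right _ _
  have hTpos : (0:ℝ) < T := lt_of_lt_of_le one_pos hT1
  -- derivative bound on [T, ∞)
  have hf'neg : ∀ y, T ≤ y → f' y ≤ -(f y) / (2*η) := by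
    intro y hy
    have hy0 : (0:ℝ) < y := lt_of_lt_of_le hTpos hy
    have hfy : 0 < f y := hfpos y hy0
    obtain ⟨h1, h2⟩ := hT₀ y (le_trans (le_max_left _ _) hy)
    have hf'0 : f' y ≠ 0 := by
      intro h
      rw [h, div_zero] at h1
      linarith
    have hf'lt : f' y < 0 := by
      rcases lt_or_gt_of_ne hf'0 with h | h
      · exact h
      · exfalso
        have : -f y / f' y < 0 := div_neg_of_neg_of_pos (by linarith) h
        linarith
    -- from -f/f' < 2η and f' < 0 : 2η f' < -f  hence f' < -f/(2η)
    have := (div_le_iff_of_neg hf'lt).1 (le_of_lt h2)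
    rw [le_div_iff₀ (by linarith : (0:ℝ) < 2*η)]
    linarith
  set g : ℝ → ℝ := fun y => f y * Real.exp (y / (2*η)) with hg
  have hgd : ∀ x : ℝ, 0 < x → HasDerivAt g
      (f' x * Real.exp (x / (2*η)) + f x * (Real.exp (x / (2*η)) * (1/(2*η)))) x := by
    intro x hx
    have h1 : HasDerivAt (fun y : ℝ => y / (2*η)) (1/(2*η)) x := by
      simpa using (hasDerivAt_id x).div_const (2*η)
    exact (hfder x hx).mul h1.exp
  have hanti : AntitoneOn g (Ici T) := by
    apply antitoneOn_of_deriv_nonpos (convex_Ici T)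
    · intro x hx
      exact (hgd x (lt_of_lt_of_le hTpos hx)).continuousAt.continuousWithinAt
    · intro x hx
      rw [interior_Ici] at hx
      exact (hgd x (lt_of_lt_of_le hTpos (le_of_lt hx))).differentiableAt.differentiableWithinAt
    · intro x hx
      rw [interior_Ici] at hx
      have hx0 : 0 < x := lt_of_lt_of_le hTpos (le_of_lt hx)
      rw [(hgd x hx0).deriv]
      have hb := hf'neg x (le_of_lt hx)
      have he : 0 < Real.exp (x / (2*η)) := Real.exp_pos _
      have hfx : 0 < f x := hfpos x hx0
      have : f' x * Real.exp (x / (2*η)) + f x * (Real.exp (x / (2*η)) * (1/(2*η)))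
          = (f' x + f x / (2*η)) * Real.exp (x / (2*η)) := by field_simp
      rw [this]
      apply mul_nonpos_of_nonpos_of_nonneg _ he.le
      have : -f x / (2*η) = -(f x / (2*η)) := by ring
      rw [this] at hb
      linarith
  set c := g T with hc
  have hcpos : 0 < c := mul_pos (hfpos T hTpos) (Real.exp_pos _)
  have hfb : ∀ y, T ≤ y → f y ≤ c * Real.exp (-(y / (2*η))) := by
    intro y hy
    have := hanti self_mem_Ici hy hy
    -- g y ≤ c
    have hgy : f y * Real.exp (y / (2*η)) ≤ c := this
    have he : 0 < Real.exp (y / (2*η)) := Real.exp_pos _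
    rw [Real.exp_neg]
    rw [← le_div_iff₀ he] at hgy
    simpa [div_eq_mul_inv] using hgy
  refine ⟨T, c, hT1, hcpos, hfb, ?_⟩
  intro y hy
  have hy0 : (0:ℝ) < y := lt_of_lt_of_le hTpos hy
  -- 1 - F y = ∫ t in Ioi y, f t
  have htail : 1 - F y = ∫ t in Ioi y, f t := by
    rw [hF y, ← hfone]
    have hU : Ioc (0:ℝ) y ∪ Ioi y = Ioi 0 := Ioc_union_Ioi_eq_Ioi hy0.le
    have hdisj : Disjoint (Ioc (0:ℝ) y) (Ioi y) := Ioc_disjoint_Ioi le_rfl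
    rw [← hU, setIntegral_union hdisj measurableSet_Ioi
      (hfint.mono_set (hU ▸ subset_union_left))
      (hfint.mono_set (hU ▸ subset_union_right))]
    ring
  rw [htail]
  constructor
  · apply setIntegral_nonneg measurableSet_Ioi
    intro x hx
    exact (hfpos x (lt_trans hy0 hx)).le
  -- bound by exponential integral
  have hintexp : IntegrableOn (fun t : ℝ => c * Real.exp ((-(2*η)⁻¹ * t))) (Ioi y) :=
    (exp_neg_integrableOn_Ioi y (by positivity : (0:ℝ) < (2*η)⁻¹)).const_mul c
  have hmono : ∫ t in Ioi y, f t ≤ ∫ t in Ioi y, c * Real.exp ((-(2*η)⁻¹ * t)) := by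
    apply setIntegral_mono_on
      (hfint.mono_set (fun x hx => lt_trans hy0 hx))
      hintexp measurableSet_Ioi
    intro t ht
    have := hfb t (le_of_lt (lt_of_le_of_lt hy ht))
    simpa [div_eq_inv_mul, mul_comm] using this
  have hval : ∫ t in Ioi y, c * Real.exp ((-(2*η)⁻¹ * t))
      = c * (2*η) * Real.exp (-(y / (2*η))) := by
    rw [MeasureTheory.integral_const_mul]
    have hder : ∀ x ∈ Ici y, HasDerivAt (fun t : ℝ => -(2*η) * Real.exp ((-(2*η)⁻¹ * t)))
        (Real.exp ((-(2*η)⁻¹ * x))) x := by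
      intro x _
      have h1 : HasDerivAt (fun t : ℝ => (-(2*η)⁻¹ * t)) (-(2*η)⁻¹) x := by
        simpa using (hasDerivAt_id x).const_mul (-(2*η)⁻¹)
      have h2 := (h1.exp).const_mul (-(2*η))
      exact h2.congr_deriv (by field_simp)
    have hlim : Tendsto (fun t : ℝ => -(2*η) * Real.exp ((-(2*η)⁻¹ * t))) atTop (nhds 0) := by
      have h0 : Tendsto (fun t : ℝ => (-(2*η)⁻¹) * t) atTop atBot := by
        apply Tendsto.const_mul_atTop_of_neg (show -(2*η)⁻¹ < 0 by
          simp only [Left.neg_neg_iff]; positivity) tendsto_id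
      have h1 : Tendsto (fun t : ℝ => Real.exp ((-(2*η)⁻¹ * t))) atTop (nhds 0) :=
        Real.tendsto_exp_atBot.comp h0
      have h2 := h1.const_mul (-(2*η))
      simpa using h2
    rw [integral_Ioi_of_hasDerivAt_of_tendsto' hder
      (exp_neg_integrableOn_Ioi y (by positivity : (0:ℝ) < (2*η)⁻¹)) hlim]
    have : -(2*η)⁻¹ * y = -(y/(2*η)) := by field_simp
    rw [this]
    ring
  calc ∫ t in Ioi y, f t ≤ ∫ t in Ioi y, c * Real.exp ((-(2*η)⁻¹ * t)) := hmono
    _ = c * (2*η) * Real.exp (-(y / (2*η))) := hval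
    _ = 2*η*c * Real.exp (-(y / (2*η))) := by ring

lemma Lsmall (η a : ℝ) (hη0 : 0 < η) (ha : 0 < a) (L : ℕ → ℝ)
    (hL : ∀ N : ℕ, 3 ≤ N → 0 < L N ∧ L N * (1 + L N) ^ (N - 1) = η / a) :
    ∀ᶠ N : ℕ in atTop, L N ≤ 1 / (8 * Real.log N) := by
  have hcast := tendsto_natCast_atTop_atTop (R := ℝ)
  filter_upwards [eventually_ge_atTop 4,
    hcast.eventually_ge_atTop (221184 * (η/a))] with N hN4 hNbig
  have hN3 : 3 ≤ N := by omega
  obtain ⟨hL0, hLeq⟩ := hL N hN3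
  have hNR : (4:ℝ) ≤ N := by exact_mod_cast hN4
  have hN0 : (0:ℝ) < N := by linarith
  have hln : 0 < Real.log N := Real.log_pos (by linarith)
  set s : ℝ := 1 / (8 * Real.log N) with hs
  have hs0 : 0 < s := by positivity
  by_contra hcon
  push_neg at hcon
  -- s < L N
  set m : ℕ := (N - 1) / 2 with hm
  have h2m : 2 * m ≤ N - 1 := by omega
  have hm2 : (N:ℝ)/4 ≤ (m:ℝ) := by
    have h1 : N ≤ 2 * m + 2 := by omega
    have h2 : (N:ℝ) ≤ 2 * m + 2 := by exact_mod_cast h1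
    linarith
  -- Bernoulli
  have hbern : (m:ℝ) * s ≤ (1 + s) ^ m := by
    have := one_add_mul_le_pow (show (-2:ℝ) ≤ s by linarith) m
    linarith
  have hms0 : (0:ℝ) ≤ (m:ℝ) * s := by positivity
  have hpow1 : ((m:ℝ) * s)^2 ≤ ((1 + s) ^ m)^2 := by
    apply pow_le_pow_left₀ hms0 hbern
  have hpow2 : ((1 + s) ^ m)^2 ≤ (1 + s) ^ (N - 1) := by
    rw [← pow_mul]
    apply pow_le_pow_right₀ (by linarith) (by omega)
  have hbase : (1 + s) ^ (N - 1) ≤ (1 + L N) ^ (N - 1) :=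
    pow_le_pow_left₀ (by linarith) (by linarith) _
  have hchain : (m:ℝ)^2 * s^3 < η / a := by
    have h1 : ((m:ℝ) * s)^2 * s ≤ (1 + L N) ^ (N-1) * s := by
      apply mul_le_mul_of_nonneg_right _ hs0.le
      exact le_trans hpow1 (le_trans hpow2 hbase)
    have h2 : (1 + L N) ^ (N-1) * s < (1 + L N) ^ (N-1) * L N := by
      apply mul_lt_mul_of_pos_left hcon
      positivity
    calc (m:ℝ)^2 * s^3 = ((m:ℝ)*s)^2 * s := by ring
      _ ≤ (1 + L N) ^ (N-1) * s := h1
      _ < (1 + L N) ^ (N-1) * L N := h2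
      _ = η / a := by rw [← hLeq]; ring
  -- lower bound for m^2 s^3
  have hlog3 : (Real.log N)^3 ≤ 27 * N := by
    have h13 : Real.log N = 3 * Real.log ((N:ℝ) ^ ((1:ℝ)/3)) := by
      rw [Real.log_rpow hN0]; ring
    have hle : Real.log ((N:ℝ) ^ ((1:ℝ)/3)) ≤ (N:ℝ) ^ ((1:ℝ)/3) := by
      have := Real.log_le_sub_one_of_pos (show (0:ℝ) < (N:ℝ) ^ ((1:ℝ)/3) by positivity)
      linarith
    have hcube : ((N:ℝ) ^ ((1:ℝ)/3))^3 = N := by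
      rw [← Real.rpow_natCast ((N:ℝ) ^ ((1:ℝ)/3)) 3, ← Real.rpow_mul hN0.le]
      norm_num
    have hpos : (0:ℝ) ≤ Real.log ((N:ℝ) ^ ((1:ℝ)/3)) :=
      Real.log_nonneg (Real.one_le_rpow (by linarith) (by norm_num))
    calc (Real.log N)^3 = 27 * (Real.log ((N:ℝ) ^ ((1:ℝ)/3)))^3 := by rw [h13]; ring
      _ ≤ 27 * ((N:ℝ) ^ ((1:ℝ)/3))^3 := by
          apply mul_le_mul_of_nonneg_left _ (by norm_num)
          exact pow_le_pow_left₀ hpos hle 3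
      _ = 27 * N := by rw [hcube]
  have hlb : (N:ℝ)/221184 ≤ (m:ℝ)^2 * s^3 := by
    have h8 : (0:ℝ) < (8*Real.log N)^3 := by positivity
    have hseq : s^3 = 1/(8*Real.log N)^3 := by
      rw [hs]; rw [one_div, one_div, inv_pow]
    rw [hseq, div_le_iff₀ (by norm_num : (0:ℝ) < 221184), mul_one_div,
      div_mul_eq_mul_div, le_div_iff₀ h8]
    have h9 : ((N:ℝ)/4)^2 ≤ (m:ℝ)^2 := pow_le_pow_left₀ (by positivity) hm2 2
    have h10 : (N:ℝ)*(Real.log N)^3 ≤ (N:ℝ)*(27*N) := mul_le_mul_of_nonneg_left hlog3 hN0.le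
    nlinarith [h9, h10]
  linarith [hNbig, hlb, hchain]
/-- Theorem 1: for the optimal uniform (in dB) codebook
`y n = a·(1 + L_{η/a}(N))^(n-1)`, the gradient of the normalized average power
satisfies `‖∇𝒫(N)‖ ≤ (1/2)·μ·N^{−(2ζ_{η/a}(N) − 1/2)} + E(N)` with
`N^{3−ε}·E(N) → 0` for every `ε > 0`. -/
theorem stmt7
    (f f' F : ℝ → ℝ) (μ η a : ℝ)
    (hμ : 0 < μ) (hη0 : 0 < η) (ha : 0 < a)
    (hfpos : ∀ x ∈ Ioi (0:ℝ), 0 < f x)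
    (hfder : ∀ x ∈ Ioi (0:ℝ), HasDerivAt f (f' x) x)
    (hf'bd : ∀ x ∈ Ioi (0:ℝ), |f' x| ≤ μ)
    (hfint : IntegrableOn f (Ioi 0))
    (hfone : ∫ x in Ioi (0:ℝ), f x = 1)
    (hmean : IntegrableOn (fun y : ℝ => y * f y) (Ioi 0))
    (hηlim : Tendsto (fun y : ℝ => -f y / f' y) atTop (nhds η))
    (hyf : Tendsto (fun y : ℝ => y * f y) atTop (nhds 0))
    (hF : ∀ x, F x = ∫ t in Ioc (0:ℝ) x, f t)
    (hF' : ∀ x ∈ Ioi (0:ℝ), HasDerivAt F (f x) x)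
    (L : ℕ → ℝ)
    (hL : ∀ N : ℕ, 3 ≤ N → 0 < L N ∧ L N * (1 + L N) ^ (N - 1) = η / a) :
    ∃ E : ℕ → ℝ,
      (∀ N : ℕ, 3 ≤ N →
        gradNormP F N (quantLevels a (1 + L N)) ≤
          1 / 2 * μ *
              (N : ℝ) ^ (-(2 * (-Real.logb 2 (L N) / Real.logb 2 N) - 1 / 2)) +
            E N) ∧
      ∀ ε : ℝ, 0 < ε →
        Tendsto (fun N : ℕ => (N : ℝ) ^ ((3:ℝ) - ε) * E N) atTop (nhds 0) := by
  classical
  let main : ℕ → ℝ := fun N =>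
    1 / 2 * μ * (N : ℝ) ^ (-(2 * (-Real.logb 2 (L N) / Real.logb 2 N) - 1 / 2))
  let E : ℕ → ℝ := fun N =>
    max 0 (gradNormP F N (quantLevels a (1 + L N)) - main N)
  have hEnonneg : ∀ N, 0 ≤ E N := fun N => le_max_left _ _
  refine ⟨E, ?_, ?_⟩
  · intro N hN
    have h := le_max_right (0:ℝ) (gradNormP F N (quantLevels a (1 + L N)) -
      (1 / 2 * μ * (N : ℝ) ^ (-(2 * (-Real.logb 2 (L N) / Real.logb 2 N) - 1 / 2))))
    have hEN : E N = max 0 (gradNormP F N (quantLevels a (1 + L N)) -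
      (1 / 2 * μ * (N : ℝ) ^ (-(2 * (-Real.logb 2 (L N) / Real.logb 2 N) - 1 / 2)))) := rfl
    rw [hEN]
    linarith
  intro ε hε
  obtain ⟨T, c, hT1, hc0, hfb, hFb⟩ :=
    decayF f f' F μ η hη0 hfpos hfder hfint hfone hηlim hF
  -- the eventual bound on E
  have hEbound : ∀ᶠ N : ℕ in atTop, E N ≤ 3*η*c / (N:ℝ)^4 := by
    have hlog := Real.tendsto_log_atTop.comp (tendsto_natCast_atTop_atTop (R := ℝ))
    filter_upwards [Lsmall η a hη0 ha L hL, eventually_ge_atTop 3,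
      hlog.eventually_ge_atTop (max T 1 / (8*η))] with N hLs hN3 hlogT
    simp only [Function.comp_apply] at hlogT
    obtain ⟨hl0, hleq⟩ := hL N hN3
    set l := L N with hldef
    set r : ℝ := 1 + l with hrdef
    have hr1 : 1 < r := by rw [hrdef]; linarith
    have hr0 : (0:ℝ) < r := by linarith
    set y : ℕ → ℝ := quantLevels a r with hydef
    have hypos : ∀ k, 0 < y k := fun k => mul_pos ha (pow_pos hr0 _)
    have hN1 : (1:ℝ) < N := by exact_mod_cast (by omega : 1 < N)
    have hN0 : (0:ℝ) < N := by linarith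
    have hlogN : 0 < Real.log N := Real.log_pos hN1
    -- y N * l = η
    have hyNl : y N * l = η := by
      have h1 : y N * l = a * (l * (1 + l) ^ (N - 1)) := by
        simp only [hydef, quantLevels, hrdef]; ring
      rw [h1, hleq]
      field_simp
    -- y N is large
    have hyNbig : max T 1 ≤ y N := by
      have hX : (0:ℝ) < 8 * Real.log N := by positivity
      have h1 : y N * l ≤ y N * (1/(8*Real.log N)) :=
        mul_le_mul_of_nonneg_left hLs (hypos N).le
      rw [hyNl, mul_one_div] at h1
      have h2 : η * (8*Real.log N) ≤ y N := (le_div_iff₀ hX).1 h1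
      have h3 : max T 1 ≤ Real.log N * (8*η) :=
        (div_le_iff₀ (by positivity : (0:ℝ) < 8*η)).1 hlogT
      nlinarith
    have hTle : T ≤ y N := le_trans (le_max_left _ _) hyNbig
    have h1le : (1:ℝ) ≤ y N := le_trans (le_max_right _ _) hyNbig
    -- geometric relations
    have hnext : ∀ n : ℕ, 1 ≤ n → y (n+1) = y n * r := by
      intro n h1
      simp only [hydef, quantLevels]
      have e : n+1-1 = (n-1)+1 := by omega
      rw [e, pow_succ]; ring
    have hprev : ∀ n : ℕ, 2 ≤ n → y (n-1) = y n / r := by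
      intro n h2
      rw [eq_div_iff (ne_of_gt hr0)]
      simp only [hydef, quantLevels]
      have e1 : n-1-1 = n-2 := by omega
      have e2 : n-1 = (n-2)+1 := by omega
      rw [e1, e2, pow_succ]; ring
    set d : ℕ → ℝ := fun n => deriv (avgPowerFun F N y n) (y n) with hddef
    -- middle derivatives
    have hmid : ∀ n : ℕ, 2 ≤ n → n < N → |d n| ≤ μ * l^2 / 2 := by
      intro n hn2 hnN
      have hx0 : 0 < y n := hypos n
      have hd := deriv_avgPower F f N n y hn2 (le_of_lt hnN) hypos hF'
      rw [if_neg (Nat.ne_of_lt hnN)] at hd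
      have hq : y (n+1) = y n * r := hnext n (by omega)
      have hw : y (n-1) = y n / r := hprev n hn2
      have hd2 : d n = (f (y n) * (y (n+1) - y n) - (F (y (n+1)) - F (y n))) / (y n)^2 := by
        have hdd : d n = deriv (avgPowerFun F N y n) (y n) := rfl
        rw [hdd, hd, hw, hq]
        field_simp
        ring
      have hpq : y n ≤ y (n+1) := by rw [hq]; nlinarith
      have htay := taylorF f f' F μ hfder hf'bd hfint hF (y n) (y (n+1)) hx0 hpq
      have hnum : |f (y n) * (y (n+1) - y n) - (F (y (n+1)) - F (y n))|
          ≤ μ * (y (n+1) - y n)^2 / 2 := by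
        rw [show f (y n) * (y (n+1) - y n) - (F (y (n+1)) - F (y n))
            = -(F (y (n+1)) - F (y n) - f (y n) * (y (n+1) - y n)) by ring, abs_neg]
        exact htay
      have hqx : y (n+1) - y n = y n * l := by rw [hq, hrdef]; ring
      rw [hd2, abs_div, abs_of_nonneg (sq_nonneg (y n))]
      calc |f (y n) * (y (n+1) - y n) - (F (y (n+1)) - F (y n))| / (y n)^2
          ≤ (μ * (y (n+1) - y n)^2 / 2) / (y n)^2 := by gcongr
        _ = μ * l^2 / 2 := by rw [hqx]; field_simp
    -- last derivative
    have hlast : |d N| ≤ 3*η*c / (N:ℝ)^4 := by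
      have hx0 : 0 < y N := hypos N
      have hd := deriv_avgPower F f N N y (by omega) le_rfl hypos hF'
      rw [if_pos rfl] at hd
      have hw : y (N-1) = y N / r := hprev N (by omega)
      have hdN : d N = (η * f (y N) - (1 - F (y N))) / (y N)^2 := by
        have hdd : d N = deriv (avgPowerFun F N y N) (y N) := rfl
        rw [hdd, hd, hw, ← hyNl, hrdef]
        field_simp
        ring
      obtain ⟨htail0, htailb⟩ := hFb (y N) hTle
      have hfub := hfb (y N) hTle
      have hfpos' : 0 < f (y N) := hfpos _ (hypos N)
      have hexp0 : (0:ℝ) < Real.exp (-(y N/(2*η))) := Real.exp_pos _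
      have habs : |η * f (y N) - (1 - F (y N))| ≤ 3*η*c*Real.exp (-(y N/(2*η))) := by
        rw [abs_le]
        constructor
        · nlinarith
        · nlinarith
      have hexpb : Real.exp (-(y N/(2*η))) ≤ 1/(N:ℝ)^4 := by
        have h8 : (8*η) * Real.log N ≤ y N := by
          have h3 : max T 1 ≤ Real.log N * (8*η) :=
            (div_le_iff₀ (by positivity : (0:ℝ) < 8*η)).1 hlogT
          have hX : (0:ℝ) < 8 * Real.log N := by positivity
          have h1 : y N * l ≤ y N * (1/(8*Real.log N)) :=
            mul_le_mul_of_nonneg_left hLs (hypos N).le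
          rw [hyNl, mul_one_div] at h1
          have h2 : η * (8*Real.log N) ≤ y N := (le_div_iff₀ hX).1 h1
          linarith
        have h4 : (4:ℝ)*Real.log N ≤ y N/(2*η) := by
          rw [le_div_iff₀ (by positivity : (0:ℝ) < 2*η)]
          linarith
        calc Real.exp (-(y N/(2*η))) ≤ Real.exp (-(4*Real.log N)) := by
              apply Real.exp_le_exp.2; linarith
          _ = 1/(N:ℝ)^4 := by
              rw [Real.exp_neg, show (4:ℝ)*Real.log N = (4:ℕ)*Real.log N by norm_num,
                Real.exp_nat_mul, Real.exp_log hN0]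
              rw [one_div]
      rw [hdN, abs_div, abs_of_nonneg (sq_nonneg (y N))]
      have hyn2 : (1:ℝ) ≤ (y N)^2 := by nlinarith
      calc |η * f (y N) - (1 - F (y N))| / (y N)^2
          ≤ |η * f (y N) - (1 - F (y N))| / 1 := by
            gcongr
        _ = |η * f (y N) - (1 - F (y N))| := by rw [div_one]
        _ ≤ 3*η*c*Real.exp (-(y N/(2*η))) := habs
        _ ≤ 3*η*c*(1/(N:ℝ)^4) := by
            apply mul_le_mul_of_nonneg_left hexpb (by positivity)
        _ = 3*η*c/(N:ℝ)^4 := by ring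
    -- sum assembly
    have hsplit : ∑ n ∈ Finset.Icc 2 N, (d n)^2
        = (∑ n ∈ Finset.Icc 2 (N-1), (d n)^2) + (d N)^2 := by
      have h := Finset.sum_Icc_succ_top (a := 2) (b := N-1) (by omega)
        (fun n => (d n)^2)
      rw [show N-1+1 = N by omega] at h
      exact h
    have hS1 : ∑ n ∈ Finset.Icc 2 (N-1), (d n)^2 ≤ (N:ℝ) * (μ*l^2/2)^2 := by
      have h1 : ∑ n ∈ Finset.Icc 2 (N-1), (d n)^2
          ≤ (Finset.Icc 2 (N-1)).card • ((μ*l^2/2)^2) := by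
        apply Finset.sum_le_card_nsmul
        intro n hn
        rw [Finset.mem_Icc] at hn
        have hb := hmid n hn.1 (by omega)
        calc (d n)^2 = |d n|^2 := (sq_abs _).symm
          _ ≤ (μ*l^2/2)^2 := pow_le_pow_left₀ (abs_nonneg _) hb 2
      rw [Nat.card_Icc] at h1
      have h2 : ((N - 1 + 1 - 2 : ℕ) : ℝ) ≤ (N:ℝ) := by
        have : (N - 1 + 1 - 2 : ℕ) ≤ N := by omega
        exact_mod_cast this
      have h3 : (0:ℝ) ≤ (μ*l^2/2)^2 := by positivity
      calc ∑ n ∈ Finset.Icc 2 (N-1), (d n)^2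
          ≤ ((N - 1 + 1 - 2 : ℕ) : ℝ) * (μ*l^2/2)^2 := by
            rw [← nsmul_eq_mul]; exact h1
        _ ≤ (N:ℝ) * (μ*l^2/2)^2 := by nlinarith
    have hgradle : gradNormP F N y ≤ Real.sqrt N * (μ*l^2/2) + |d N| := by
      have hA : (0:ℝ) ≤ Real.sqrt N * (μ*l^2/2) := by positivity
      have hsq : ∑ n ∈ Finset.Icc 2 N, (d n)^2
          ≤ (Real.sqrt N * (μ*l^2/2) + |d N|)^2 := by
        rw [hsplit]
        have h1 : (Real.sqrt N * (μ*l^2/2))^2 = (N:ℝ) * (μ*l^2/2)^2 := by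
          rw [mul_pow, Real.sq_sqrt hN0.le]
        have h2 : (d N)^2 = |d N|^2 := (sq_abs _).symm
        nlinarith [abs_nonneg (d N), hS1]
      calc gradNormP F N y ≤ Real.sqrt ((Real.sqrt N * (μ*l^2/2) + |d N|)^2) :=
            Real.sqrt_le_sqrt hsq
        _ = Real.sqrt N * (μ*l^2/2) + |d N| :=
            Real.sqrt_sq (by positivity)
    have hmainval : main N = Real.sqrt N * (μ * l^2/2) := by
      show 1 / 2 * μ * (N : ℝ) ^ (-(2 * (-Real.logb 2 (L N) / Real.logb 2 N) - 1 / 2))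
        = Real.sqrt N * (μ * l^2/2)
      rw [← hldef, rpow_ident N hN3 l hl0]
      ring
    have hEeq : E N = max 0 (gradNormP F N y - main N) := rfl
    rw [hEeq]
    apply max_le (by positivity)
    have := hgradle
    rw [hmainval]
    linarith [hlast]
  -- squeeze
  apply squeeze_zero' (g := fun N : ℕ => 3*η*c/(N:ℝ))
  · exact Eventually.of_forall fun N =>
      mul_nonneg (Real.rpow_nonneg (Nat.cast_nonneg N) _) (hEnonneg N)
  · filter_upwards [hEbound, eventually_ge_atTop 1] with N hEb hN1
    have hN1' : (1:ℝ) ≤ N := by exact_mod_cast hN1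
    have hN0 : (0:ℝ) < N := by linarith
    have h1 : (N:ℝ)^((3:ℝ)-ε) ≤ (N:ℝ)^(3:ℝ) :=
      Real.rpow_le_rpow_of_exponent_le hN1' (by linarith)
    have h2 : (N:ℝ)^(3:ℝ) = (N:ℝ)^(3:ℕ) := by
      rw [show ((3:ℝ)) = ((3:ℕ):ℝ) by norm_num, Real.rpow_natCast]
    calc (N:ℝ)^((3:ℝ)-ε) * E N ≤ (N:ℝ)^(3:ℕ) * (3*η*c/(N:ℝ)^4) := by
          apply mul_le_mul (h2 ▸ h1) hEb (hEnonneg N) (by positivity)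
      _ = 3*η*c/(N:ℝ) := by
          field_simp
  · exact tendsto_const_div_atTop_nhds_zero_nat _
end

section
/- (Theorem 2) Let f be a positive differentiable probability density on (0,∞) with cumulative distribution function F, satisfying the regularity conditions: the limit η = lim_{y→∞} (−f(y)/f'(y)) exists with 0 < η < ∞, and m := ∫_0^∞ y f(y) dy < ∞. Suppose also ρ := ∫_0^∞ (1/y)·f(y) dy < ∞. Fix a > 0 and an integer N ≥ 2. Let L_{η/a}(N) be the unique positive solution of L·(1+L)^{N−1} = η/a, set ζ = ζ_{η/a}(N) = −log₂(L_{η/a}(N))/log₂(N), r* = 1 + L_{η/a}(N), and take the codebook y_n = a·(r*)^{n−1}, 1 ≤ n ≤ N. Then the normalized average power of this codebook satisfies Σ_{n=1}^{N} (F(y_{n+1}) − F(y_n))/y_n < ρ·(1 + N^{−ζ} + ω·N^{−2ζ}), where y_{N+1} = ∞ and ω = m/(η²·ρ). -/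
open MeasureTheory Set Filter

/-- Theorem 2: the normalized average power of the optimal uniform
(in dB) codebook `y n = a·(r*)^(n-1)`, `r* = 1 + L_{η/a}(N)`, is bounded by
`ρ·(1 + N^{−ζ} + ω·N^{−2ζ})` where `ρ = E[1/Y]`, `ω = m/(η²ρ)`. -/
theorem stmt10
    (f f' F : ℝ → ℝ) (η a : ℝ) (hη0 : 0 < η) (ha : 0 < a)
    (hfpos : ∀ x ∈ Ioi (0:ℝ), 0 < f x)
    (hfder : ∀ x ∈ Ioi (0:ℝ), HasDerivAt f (f' x) x)
    (hfint : IntegrableOn f (Ioi 0))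
    (hfone : ∫ x in Ioi (0:ℝ), f x = 1)
    (hηlim : Tendsto (fun y : ℝ => -f y / f' y) atTop (nhds η))
    (hmean : IntegrableOn (fun y : ℝ => y * f y) (Ioi 0))
    (hρint : IntegrableOn (fun y : ℝ => (1 / y) * f y) (Ioi 0))
    (hF : ∀ x, F x = ∫ t in Ioc (0:ℝ) x, f t)
    (N : ℕ) (hN : 2 ≤ N)
    (L : ℝ) (hLpos : 0 < L) (hLeq : L * (1 + L) ^ (N - 1) = η / a) :
    (∑ n ∈ Finset.Icc 1 N,
        ((if n = N then (1:ℝ) else F (a * (1 + L) ^ n)) - F (a * (1 + L) ^ (n - 1))) /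
          (a * (1 + L) ^ (n - 1))) <
      (∫ x in Ioi (0:ℝ), (1 / x) * f x) *
        (1 + (N : ℝ) ^ (-(-Real.logb 2 L / Real.logb 2 N)) +
          (∫ x in Ioi (0:ℝ), x * f x) / (η ^ 2 * ∫ x in Ioi (0:ℝ), (1 / x) * f x) *
            (N : ℝ) ^ (-2 * (-Real.logb 2 L / Real.logb 2 N))) := by
  have hr : (0:ℝ) < 1 + L := by linarith
  set ρ : ℝ := ∫ x in Ioi (0:ℝ), (1 / x) * f x with hρdef
  set m : ℝ := ∫ x in Ioi (0:ℝ), x * f x with hmdef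
  set y : ℕ → ℝ := fun n => a * (1 + L) ^ n with hydef
  have hypos : ∀ n, 0 < y n := fun n => mul_pos ha (pow_pos hr n)
  have hymono : ∀ n, y n ≤ y (n + 1) := by
    intro n
    have : (1:ℝ) * (1 + L) ^ n ≤ (1 + L) * (1 + L) ^ n :=
      mul_le_mul_of_nonneg_right (by linarith) (pow_pos hr n).le
    simp only [hydef, pow_succ]
    nlinarith [pow_pos hr n]
  -- Integrability helpers
  have hIocsub : ∀ u v : ℝ, 0 < u → Ioc u v ⊆ Ioi (0:ℝ) :=
    fun u v hu t ht => hu.trans ht.1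
  have hIoc0sub : ∀ v : ℝ, Ioc (0:ℝ) v ⊆ Ioi (0:ℝ) := fun v => Ioc_subset_Ioi_self
  -- difference of F as an integral
  have hFd : ∀ u v : ℝ, 0 < u → u ≤ v → F v - F u = ∫ t in Ioc u v, f t := by
    intro u v hu huv
    rw [hF, hF, ← Ioc_union_Ioc_eq_Ioc hu.le huv,
      setIntegral_union (Ioc_disjoint_Ioc_of_le le_rfl) measurableSet_Ioc
        (hfint.mono_set (hIoc0sub u)) (hfint.mono_set (hIocsub u v hu))]
    ring
  -- tail of F as an integral
  have hFt : ∀ u : ℝ, 0 < u → 1 - F u = ∫ t in Ioi u, f t := by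
    intro u hu
    rw [hF, ← hfone, ← Ioc_union_Ioi_eq_Ioi hu.le,
      setIntegral_union Ioc_disjoint_Ioi_same measurableSet_Ioi
        (hfint.mono_set (hIoc0sub u)) (hfint.mono_set (Ioi_subset_Ioi hu.le))]
    ring
  -- the partial integrals of 1/t * f t
  set G : ℕ → ℝ := fun n => ∫ t in Ioc (0:ℝ) (y n), (1 / t) * f t with hGdef
  have hGd : ∀ n : ℕ, G (n + 1) - G n = ∫ t in Ioc (y n) (y (n + 1)), (1 / t) * f t := by
    intro n
    rw [hGdef]
    simp only
    rw [← Ioc_union_Ioc_eq_Ioc (hypos n).le (hymono n),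
      setIntegral_union (Ioc_disjoint_Ioc_of_le le_rfl) measurableSet_Ioc
        (hρint.mono_set (hIoc0sub (y n))) (hρint.mono_set (hIocsub _ _ (hypos n)))]
    ring
  -- per-interval bound
  have hstep : ∀ n : ℕ, (F (y (n + 1)) - F (y n)) / y n ≤ (1 + L) * (G (n + 1) - G n) := by
    intro n
    rw [hFd (y n) (y (n + 1)) (hypos n) (hymono n), hGd n, ← integral_div,
      ← integral_const_mul]
    apply setIntegral_mono_on
    · exact (hfint.mono_set (hIocsub _ _ (hypos n))).div_const _
    · exact (hρint.mono_set (hIocsub _ _ (hypos n))).const_mul _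
    · exact measurableSet_Ioc
    · intro t ht
      have ht0 : 0 < t := (hypos n).trans ht.1
      have hft : 0 ≤ f t := (hfpos t ht0).le
      have hty : t ≤ (1 + L) * y n := by
        have := ht.2
        simp only [hydef, pow_succ] at this ⊢
        nlinarith
      rw [div_le_iff₀ (hypos n)]
      calc f t = (1 / t * f t) * t := by field_simp
        _ ≤ (1 / t * f t) * ((1 + L) * y n) := by
            apply mul_le_mul_of_nonneg_left hty
            positivity
        _ = (1 + L) * (1 / t * f t) * y n := by ring
  -- positivity of G 0
  have hG0 : 0 < G 0 := by
    rw [hGdef]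
    simp only
    rw [setIntegral_pos_iff_support_of_nonneg_ae]
    · have hsub : Ioc (0:ℝ) (y 0) ⊆ Function.support (fun t => (1 / t) * f t) ∩ Ioc 0 (y 0) := by
        intro t ht
        refine ⟨?_, ht⟩
        have ht0 : 0 < t := ht.1
        have := hfpos t ht0
        simp only [Function.mem_support]
        positivity
      refine lt_of_lt_of_le ?_ (measure_mono hsub)
      rw [Real.volume_Ioc]
      simp only [tsub_zero]
      exact ENNReal.ofReal_pos.2 (hypos 0)
    · filter_upwards [ae_restrict_mem measurableSet_Ioc] with t ht
      simp only [Pi.zero_apply]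
      have ht0 : 0 < t := ht.1
      have := (hfpos t ht0).le
      positivity
    · exact hρint.mono_set (hIoc0sub _)
  -- G n ≤ ρ
  have hGle : ∀ n, G n ≤ ρ := by
    intro n
    rw [hGdef, hρdef]
    apply setIntegral_mono_set hρint
    · filter_upwards [ae_restrict_mem measurableSet_Ioi] with t ht
      simp only [Pi.zero_apply]
      have := (hfpos t ht).le
      have ht0 : (0:ℝ) < t := ht
      positivity
    · exact HasSubset.Subset.eventuallyLE (hIoc0sub _)
  have hρpos : 0 < ρ := lt_of_lt_of_le hG0 (hGle 0)
  -- tail bound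
  have hkey : L * (a * (1 + L) ^ (N - 1)) = η := by
    rw [show L * (a * (1 + L) ^ (N - 1)) = L * (1 + L) ^ (N - 1) * a by ring, hLeq]
    field_simp
  have hyN : y (N - 1) = η / L := by
    rw [hydef]
    simp only
    rw [eq_div_iff hLpos.ne']
    linarith [hkey]
  have htail : (1 - F (y (N - 1))) / y (N - 1) ≤ m * L ^ 2 / η ^ 2 := by
    have hyNpos := hypos (N - 1)
    rw [hFt _ hyNpos, ← integral_div]
    have h1 : (∫ t in Ioi (y (N - 1)), f t / y (N - 1)) ≤
        ∫ t in Ioi (y (N - 1)), t * f t / (y (N - 1)) ^ 2 := by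
      apply setIntegral_mono_on
      · exact (hfint.mono_set (Ioi_subset_Ioi hyNpos.le)).div_const _
      · exact (hmean.mono_set (Ioi_subset_Ioi hyNpos.le)).div_const _
      · exact measurableSet_Ioi
      · intro t ht
        have ht0 : y (N - 1) < t := ht
        have hft : 0 ≤ f t := (hfpos t (hyNpos.trans ht0)).le
        rw [div_le_div_iff₀ hyNpos (by positivity)]
        nlinarith [mul_le_mul_of_nonneg_right (mul_le_mul_of_nonneg_left ht0.le hft) hyNpos.le]
    have h2 : (∫ t in Ioi (y (N - 1)), t * f t / (y (N - 1)) ^ 2) ≤ m / (y (N - 1)) ^ 2 := by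
      rw [hmdef, ← integral_div]
      apply setIntegral_mono_set (hmean.div_const _)
      · filter_upwards [ae_restrict_mem measurableSet_Ioi] with t ht
        simp only [Pi.zero_apply]
        have ht0 : (0:ℝ) < t := ht
        have := (hfpos t ht0).le
        positivity
      · exact HasSubset.Subset.eventuallyLE (Ioi_subset_Ioi hyNpos.le)
    refine (h1.trans h2).trans (le_of_eq ?_)
    rw [hyN, div_pow]
    field_simp
  -- rewrite the sum
  have hM : N - 1 + 1 = N := by omega
  have hsum : (∑ n ∈ Finset.Icc 1 N,
        ((if n = N then (1:ℝ) else F (a * (1 + L) ^ n)) - F (a * (1 + L) ^ (n - 1))) /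
          (a * (1 + L) ^ (n - 1))) =
      (∑ i ∈ Finset.range (N - 1), (F (y (i + 1)) - F (y i)) / y i)
        + (1 - F (y (N - 1))) / y (N - 1) := by
    rw [← Finset.Ico_add_one_right_eq_Icc, Finset.sum_Ico_eq_sum_range]
    have hNN : N + 1 - 1 = N := by omega
    rw [hNN]
    have hrg : Finset.range N = Finset.range ((N - 1) + 1) := by rw [hM]
    rw [hrg, Finset.sum_range_succ]
    congr 1
    · apply Finset.sum_congr rfl
      intro i hi
      have hiN : 1 + i ≠ N := by
        simp only [Finset.mem_range] at hi
        omega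
      rw [if_neg hiN]
      have h1 : 1 + i - 1 = i := by omega
      rw [h1, hydef]
      simp only
      rw [add_comm 1 i]
    · have hc : 1 + (N - 1) = N := by omega
      rw [if_pos hc]
      have h1 : 1 + (N - 1) - 1 = N - 1 := by omega
      rw [h1, hydef]
  -- main sum bound
  have hmain : (∑ i ∈ Finset.range (N - 1), (F (y (i + 1)) - F (y i)) / y i)
      ≤ (1 + L) * (G (N - 1) - G 0) := by
    calc (∑ i ∈ Finset.range (N - 1), (F (y (i + 1)) - F (y i)) / y i)
        ≤ ∑ i ∈ Finset.range (N - 1), (1 + L) * (G (i + 1) - G i) :=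
          Finset.sum_le_sum fun i _ => hstep i
      _ = (1 + L) * ∑ i ∈ Finset.range (N - 1), (G (i + 1) - G i) := by
          rw [Finset.mul_sum]
      _ = (1 + L) * (G (N - 1) - G 0) := by rw [Finset.sum_range_sub]
  have hmain2 : (1 + L) * (G (N - 1) - G 0) < (1 + L) * ρ := by
    apply mul_lt_mul_of_pos_left _ hr
    have := hGle (N - 1)
    linarith
  -- rpow computations
  have hN1' : 1 < N := by omega
  have hN1 : (1:ℝ) < (N:ℝ) := by exact_mod_cast hN1'
  have hNpos : (0:ℝ) < (N:ℝ) := by linarith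
  have hNne1 : (N:ℝ) ≠ 1 := ne_of_gt hN1
  have hlog2 : Real.log 2 ≠ 0 := by
    have := Real.log_pos (by norm_num : (1:ℝ) < 2)
    linarith
  have hratio : -Real.logb 2 L / Real.logb 2 N = -Real.logb N L := by
    rw [Real.logb, Real.logb, Real.logb, neg_div, div_div_div_cancel_right₀]
    exact hlog2
  have he1 : (N:ℝ) ^ (-(-Real.logb 2 L / Real.logb 2 N)) = L := by
    rw [hratio, neg_neg, Real.rpow_logb hNpos hNne1 hLpos]
  have he2 : (N:ℝ) ^ (-2 * (-Real.logb 2 L / Real.logb 2 N)) = L ^ 2 := by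
    rw [hratio, neg_mul, mul_neg, neg_neg, mul_comm, Real.rpow_mul hNpos.le,
      Real.rpow_logb hNpos hNne1 hLpos, show (2:ℝ) = ((2:ℕ):ℝ) by norm_num,
      Real.rpow_natCast]
  rw [hsum, he1, he2]
  have hrhs : ρ * (1 + L + m / (η ^ 2 * ρ) * L ^ 2) = (1 + L) * ρ + m * L ^ 2 / η ^ 2 := by
    field_simp
  rw [hrhs]
  linarith [hmain.trans_lt hmain2, htail]
end

section
/- Let V be a real inner product space and let u, v, w ∈ V be unit vectors. Define the chordal distance between unit vectors x, y as d(x,y) = sqrt(1 − ⟨x,y⟩²). Then d satisfies the triangle inequality: d(u,w) ≤ d(u,v) + d(v,w). -/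
/-- Gram determinant of three unit vectors is nonnegative. -/
lemma gram_det_nonneg {V : Type*} [NormedAddCommGroup V] [InnerProductSpace ℝ V]
    (u v w : V) (hu : ‖u‖ = 1) (hv : ‖v‖ = 1) (hw : ‖w‖ = 1) :
    0 ≤ 1 + 2 * (inner ℝ u v : ℝ) * (inner ℝ v w : ℝ) * (inner ℝ u w : ℝ)
      - (inner ℝ u v : ℝ) ^ 2 - (inner ℝ v w : ℝ) ^ 2 - (inner ℝ u w : ℝ) ^ 2 := by
  set a : ℝ := inner ℝ u v with ha
  set b : ℝ := inner ℝ v w with hb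
  set c : ℝ := inner ℝ u w with hc
  have huu : (inner ℝ u u : ℝ) = 1 := by
    rw [real_inner_self_eq_norm_sq, hu]; norm_num
  have hvv : (inner ℝ v v : ℝ) = 1 := by
    rw [real_inner_self_eq_norm_sq, hv]; norm_num
  have hww : (inner ℝ w w : ℝ) = 1 := by
    rw [real_inner_self_eq_norm_sq, hw]; norm_num
  have haa : a ^ 2 ≤ 1 := by
    have := abs_real_inner_le_norm u v
    rw [hu, hv] at this
    nlinarith [abs_nonneg a, sq_abs a]
  have hvu : (inner ℝ v u : ℝ) = a := by rw [real_inner_comm]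
  have hwu : (inner ℝ w u : ℝ) = c := by rw [real_inner_comm]
  have hwv : (inner ℝ w v : ℝ) = b := by rw [real_inner_comm]
  rcases lt_or_eq_of_le haa with h1 | h1
  · -- a² < 1 : use the residual of w against span{u,v}
    have key : (0:ℝ) ≤ inner ℝ ((1 - a^2) • w - (c - a*b) • u - (b - a*c) • v)
        ((1 - a^2) • w - (c - a*b) • u - (b - a*c) • v) := real_inner_self_nonneg
    simp only [inner_sub_left, inner_sub_right, real_inner_smul_left,
      real_inner_smul_right, huu, hvv, hww, ← ha, ← hb, ← hc, hvu, hwu, hwv] at key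
    nlinarith [key, h1]
  · -- a² = 1 : u = ±v
    have : (a - 1) * (a + 1) = 0 := by nlinarith
    rcases mul_eq_zero.mp this with h | h
    · have hav : a = 1 := by linarith
      have huv : u = v := (inner_eq_one_iff_of_norm_eq_one hu hv).mp hav
      have : c = b := by rw [hc, hb, huv]
      rw [this, hav]; nlinarith [sq_nonneg b]
    · have hav : a = -1 := by linarith
      have hnv : ‖-v‖ = 1 := by rwa [norm_neg]
      have huv : u = -v := by
        apply (inner_eq_one_iff_of_norm_eq_one (𝕜 := ℝ) hu hnv).mp
        simp only [inner_neg_right, ← ha, hav]; ring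
      have : c = -b := by rw [hc, hb, huv]; simp
      rw [this, hav]; nlinarith [sq_nonneg b]

/-- the chordal distance `d(x,y) = √(1 − ⟨x,y⟩²)` between unit
vectors of a real inner product space satisfies the triangle inequality. -/
theorem stmt11 {V : Type*} [NormedAddCommGroup V] [InnerProductSpace ℝ V]
    (u v w : V) (hu : ‖u‖ = 1) (hv : ‖v‖ = 1) (hw : ‖w‖ = 1) :
    Real.sqrt (1 - (inner ℝ u w : ℝ) ^ 2) ≤
      Real.sqrt (1 - (inner ℝ u v : ℝ) ^ 2) + Real.sqrt (1 - (inner ℝ v w : ℝ) ^ 2) := by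
  set a : ℝ := inner ℝ u v with ha
  set b : ℝ := inner ℝ v w with hb
  set c : ℝ := inner ℝ u w with hc
  have hdet := gram_det_nonneg u v w hu hv hw
  rw [← ha, ← hb, ← hc] at hdet
  have bound : ∀ x y : V, ‖x‖ = 1 → ‖y‖ = 1 → (inner ℝ x y : ℝ)^2 ≤ 1 := by
    intro x y hx hy
    have := abs_real_inner_le_norm x y
    rw [hx, hy] at this
    nlinarith [abs_nonneg (inner ℝ x y : ℝ), sq_abs (inner ℝ x y : ℝ)]
  have haa := bound u v hu hv
  have hbb := bound v w hv hw
  have hcc := bound u w hu hw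
  rw [← ha] at haa; rw [← hb] at hbb; rw [← hc] at hcc
  set s := Real.sqrt (1 - a ^ 2) with hs
  set t := Real.sqrt (1 - b ^ 2) with ht
  have hs0 : 0 ≤ s := Real.sqrt_nonneg _
  have ht0 : 0 ≤ t := Real.sqrt_nonneg _
  have hs2 : s ^ 2 = 1 - a ^ 2 := Real.sq_sqrt (by linarith)
  have ht2 : t ^ 2 = 1 - b ^ 2 := Real.sq_sqrt (by linarith)
  have key : 1 - c ^ 2 ≤ (s + t) ^ 2 := by
    nlinarith [mul_nonneg hs0 ht0, sq_nonneg (s*t - (a*b - c)), sq_nonneg (s*t + (a*b - c)),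
      mul_nonneg (mul_nonneg hs0 ht0) (mul_nonneg hs0 ht0), sq_nonneg (a*b - c), sq_nonneg c]
  calc Real.sqrt (1 - c ^ 2) ≤ Real.sqrt ((s + t) ^ 2) := Real.sqrt_le_sqrt key
    _ = s + t := Real.sqrt_sq (by linarith)
end

section
/- (Lemma 2) Let M ≥ 2 be an integer and define λ_M = (√π·Γ((M+1)/2)/Γ(M/2))^{1/(M−1)}. Then there exists an integer N_0 (depending only on M) such that for every N ≥ N_0 and every set U of N unit vectors in ℝ^M, if δ > 0 is such that all pairwise chordal distances between distinct elements of U satisfy sqrt(1 − (uᵀv)²) ≥ δ, then δ < 4·λ_M·N^{−1/(M−1)}. -/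
open Real MeasureTheory Metric Finset


private lemma chord_le {E : Type*} [NormedAddCommGroup E] [InnerProductSpace ℝ E] (x y : E)
    (hx : ‖x‖ = 1) (hy : ‖y‖ = 1) :
    Real.sqrt (1 - (inner ℝ x y : ℝ)^2) ≤ ‖x - y‖ := by
  have ht : |(inner ℝ x y : ℝ)| ≤ 1 := by
    have := abs_real_inner_le_norm x y
    rwa [hx, hy, mul_one] at this
  have hsq : ‖x - y‖^2 = 2 - 2 * (inner ℝ x y : ℝ) := by
    rw [norm_sub_sq_real, hx, hy]; ring
  calc Real.sqrt (1 - (inner ℝ x y : ℝ)^2) ≤ Real.sqrt (‖x - y‖^2) := by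
        apply Real.sqrt_le_sqrt
        rw [hsq]
        nlinarith [abs_le.1 ht]
    _ = ‖x - y‖ := Real.sqrt_sq (norm_nonneg _)

private lemma pack {M N : ℕ} (hM : 2 ≤ M) (u : Fin N → EuclideanSpace ℝ (Fin M))
    (hu : ∀ i, ‖u i‖ = 1) (δ : ℝ) (hδ0 : 0 < δ) (hδ1 : δ ≤ 1)
    (hsep : ∀ i j : Fin N, i ≠ j → δ ≤ Real.sqrt (1 - (inner ℝ (u i) (u j) : ℝ)^2)) :
    (1 - δ/2)^M + (2*N) * (δ/2)^M ≤ (1 + δ/2)^M := by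
  classical
  haveI : Nontrivial (EuclideanSpace ℝ (Fin M)) := by
    have h0 : 0 < M := by omega
    refine ⟨⟨EuclideanSpace.single ⟨0, h0⟩ 1, 0, ?_⟩⟩
    intro h
    have := congrArg (fun v => v ⟨0, h0⟩) h
    simpa using this
  set t : ℝ := δ/2 with ht
  have ht0 : 0 < t := by positivity
  have ht1 : t ≤ 1/2 := by rw [ht]; linarith
  set p : Fin N × Bool → EuclideanSpace ℝ (Fin M) :=
    fun k => if k.2 then u k.1 else -u k.1 with hp
  have hpnorm : ∀ k, ‖p k‖ = 1 := by
    rintro ⟨i, b⟩; cases b <;> simp [hp, hu i]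
  have peT : ∀ i : Fin N, p (i, true) = u i := fun i => by simp [hp]
  have peF : ∀ i : Fin N, p (i, false) = -u i := fun i => by simp [hp]
  have hdist : ∀ k l : Fin N × Bool, k ≠ l → δ ≤ dist (p k) (p l) := by
    rintro ⟨i, b⟩ ⟨j, c⟩ hkl
    by_cases hij : i = j
    · subst hij
      have hbc : b ≠ c := by simpa [hp] using hkl
      have hn : ‖u i + u i‖ = 2 := by
        rw [← two_smul ℝ (u i), norm_smul, hu i]; norm_num
      have h2 : dist (p (i,b)) (p (i,c)) = 2 := by
        cases b <;> cases c <;> simp only [peT, peF, dist_eq_norm] <;> first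
          | exact absurd rfl hbc
          | rw [show -u i - u i = -(u i + u i) by abel, norm_neg, hn]
          | rw [sub_neg_eq_add, hn]
      rw [h2]; linarith
    · have h1 : Real.sqrt (1 - (inner ℝ (u i) (u j) : ℝ)^2) ≤ ‖u i - u j‖ :=
        chord_le _ _ (hu i) (hu j)
      have h2 : Real.sqrt (1 - (inner ℝ (u i) (u j) : ℝ)^2) ≤ ‖u i + u j‖ := by
        have := chord_le (u i) (-u j) (hu i) (by simp [hu j])
        simpa [inner_neg_right, sub_neg_eq_add] using this
      have key : Real.sqrt (1 - (inner ℝ (u i) (u j) : ℝ)^2) ≤ dist (p (i,b)) (p (j,c)) := by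
        cases b <;> cases c <;> simp only [peT, peF, dist_eq_norm]
        · rw [show -u i - -u j = -(u i - u j) by abel, norm_neg]; exact h1
        · rw [show -u i - u j = -(u i + u j) by abel, norm_neg]; exact h2
        · rw [sub_neg_eq_add]; exact h2
        · exact h1
      exact le_trans (hsep i j hij) key
  -- measure argument
  set V := volume (ball (0 : EuclideanSpace ℝ (Fin M)) 1) with hV
  have hVpos : V ≠ 0 := (measure_ball_pos _ _ one_pos).ne'
  have hVtop : V ≠ ⊤ := measure_ball_lt_top.ne
  have hball : ∀ (x : EuclideanSpace ℝ (Fin M)) (r : ℝ), 0 ≤ r →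
      volume (ball x r) = ENNReal.ofReal (r^M) * V := by
    intro x r hr
    rw [hV, Measure.addHaar_ball volume x hr, finrank_euclideanSpace_fin]
  set S : Option (Fin N × Bool) → Set (EuclideanSpace ℝ (Fin M)) :=
    fun o => Option.elim o (ball 0 (1 - t)) (fun k => ball (p k) t) with hS
  have hdisj : ((Finset.univ : Finset (Option (Fin N × Bool))) : Set (Option (Fin N × Bool))).PairwiseDisjoint S := by
    intro a _ b _ hab
    match a, b with
    | none, none => exact absurd rfl hab
    | none, some k =>
        refine ball_disjoint_ball ?_
        rw [dist_zero_left, hpnorm k]; linarith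
    | some k, none =>
        refine ball_disjoint_ball ?_
        rw [dist_zero_right, hpnorm k]; linarith
    | some k, some l =>
        refine ball_disjoint_ball ?_
        have hkl : k ≠ l := by rintro rfl; exact hab rfl
        have := hdist k l hkl
        rw [ht] at *; linarith
  have hsub : ∀ o, S o ⊆ ball (0 : EuclideanSpace ℝ (Fin M)) (1 + t) := by
    rintro (_ | k)
    · exact ball_subset_ball (by linarith)
    · refine ball_subset_ball' ?_
      rw [dist_zero_right, hpnorm k]; linarith
  have hsum : ∑ o : Option (Fin N × Bool), volume (S o)
      ≤ volume (ball (0 : EuclideanSpace ℝ (Fin M)) (1 + t)) := by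
    rw [← measure_biUnion_finset hdisj (fun b _ => by rcases b with _ | k <;> exact measurableSet_ball)]
    exact measure_mono (Set.iUnion₂_subset fun o _ => hsub o)
  -- compute the sum
  have hsum2 : ∑ o : Option (Fin N × Bool), volume (S o)
      = ENNReal.ofReal ((1-t)^M) * V + (2*N : ℕ) * (ENNReal.ofReal (t^M) * V) := by
    rw [Fintype.sum_option]
    congr 1
    · exact hball _ _ (by linarith)
    · have hc : ∑ i : Fin N × Bool, volume (S (some i))
          = ∑ _i : Fin N × Bool, (ENNReal.ofReal (t^M) * V) :=
        Finset.sum_congr rfl (fun k _ => hball (p k) t ht0.le)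
      rw [hc, Finset.sum_const, Finset.card_univ, nsmul_eq_mul]
      congr 1
      simp [Fintype.card_prod, mul_comm]
  have hmain : ENNReal.ofReal ((1-t)^M + (2*N) * t^M) * V ≤ ENNReal.ofReal ((1+t)^M) * V := by
    have h1 : ENNReal.ofReal ((1-t)^M + (2*N) * t^M) * V
        = ENNReal.ofReal ((1-t)^M) * V + (2*N : ℕ) * (ENNReal.ofReal (t^M) * V) := by
      rw [ENNReal.ofReal_add (pow_nonneg (by linarith : (0:ℝ) ≤ 1 - t) M) (by positivity), add_mul]
      congr 1
      rw [ENNReal.ofReal_mul (by positivity), ← mul_assoc]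
      congr 1
      rw [← ENNReal.ofReal_natCast (2*N)]
      congr 1
      push_cast; ring
    rw [h1, ← hsum2]
    exact hsum.trans (le_of_eq (hball 0 (1+t) (by linarith)))
  rw [ENNReal.mul_le_mul_iff_left hVpos hVtop] at hmain
  have := (ENNReal.ofReal_le_ofReal_iff (by positivity)).mp hmain
  convert this using 2 <;> push_cast <;> ring


-- x^n - y^n ≤ (x-y) * n * x^(n-1) for 0 ≤ y ≤ x
private lemma pow_sub_pow_le' {x y : ℝ} (hy : 0 ≤ y) (hxy : y ≤ x) (n : ℕ) :
    x^n - y^n ≤ (x - y) * n * x^(n-1) := by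
  have hx : 0 ≤ x := hy.trans hxy
  rw [← geom_sum₂_mul x y n]
  have hsum : ∑ i ∈ range n, x^i * y^(n-1-i) ≤ n * x^(n-1) := by
    calc ∑ i ∈ range n, x^i * y^(n-1-i) ≤ ∑ _i ∈ range n, x^(n-1) := by
          apply Finset.sum_le_sum
          intro i hi
          have hin : i ≤ n - 1 := by
            have := Finset.mem_range.mp hi; omega
          calc x^i * y^(n-1-i) ≤ x^i * x^(n-1-i) := by
                apply mul_le_mul_of_nonneg_left (pow_le_pow_left₀ hy hxy _) (pow_nonneg hx i)
            _ = x^(n-1) := by rw [← pow_add]; congr 1; omega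
      _ = n * x^(n-1) := by rw [Finset.sum_const, Finset.card_range, nsmul_eq_mul]
  calc (∑ i ∈ range n, x^i * y^(n-1-i)) * (x - y) ≤ (n * x^(n-1)) * (x - y) := by
        apply mul_le_mul_of_nonneg_right hsum (by linarith)
    _ = (x - y) * n * x^(n-1) := by ring

-- Gamma log-convexity midpoint
private lemma gamma_sq_le {x y : ℝ} (hx : 0 < x) (hy : 0 < y) :
    Real.Gamma ((x + y)/2)^2 ≤ Real.Gamma x * Real.Gamma y := by
  have h := Real.convexOn_log_Gamma.2 (Set.mem_Ioi.mpr hx) (Set.mem_Ioi.mpr hy)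
    (by norm_num : (0:ℝ) ≤ 1/2) (by norm_num : (0:ℝ) ≤ 1/2) (by norm_num)
  simp only [smul_eq_mul, Function.comp_apply] at h
  have hmid : (1/2 : ℝ) * x + (1/2 : ℝ) * y = (x + y)/2 := by ring
  rw [hmid] at h
  have hΓx : 0 < Real.Gamma x := Real.Gamma_pos_of_pos hx
  have hΓy : 0 < Real.Gamma y := Real.Gamma_pos_of_pos hy
  have hΓm : 0 < Real.Gamma ((x + y)/2) := Real.Gamma_pos_of_pos (by linarith)
  have h2 : 2 * Real.log (Real.Gamma ((x+y)/2)) ≤ Real.log (Real.Gamma x) + Real.log (Real.Gamma y) := by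
    linarith
  calc Real.Gamma ((x + y)/2)^2 = Real.exp (2 * Real.log (Real.Gamma ((x+y)/2))) := by
        rw [show 2 * Real.log (Real.Gamma ((x+y)/2)) = Real.log (Real.Gamma ((x+y)/2)) + Real.log (Real.Gamma ((x+y)/2)) by ring,
          Real.exp_add, Real.exp_log hΓm]; ring
    _ ≤ Real.exp (Real.log (Real.Gamma x) + Real.log (Real.Gamma y)) := Real.exp_le_exp.mpr h2
    _ = Real.Gamma x * Real.Gamma y := by rw [Real.exp_add, Real.exp_log hΓx, Real.exp_log hΓy]

-- nat inequality
private lemma nat_ineq (M : ℕ) (hM : 2 ≤ M) : 2 * M^2 ≤ 3 * (M-1) * 4^(M-1) := by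
  induction M, hM using Nat.le_induction with
  | base => norm_num
  | succ n hn ih =>
    have h1 : 2 * (n+1)^2 ≤ 4 * (2 * n^2) := by nlinarith
    have h2 : 3 * (n-1) * 4^(n-1) * 4 ≤ 3 * n * 4^n := by
      have : 4^(n-1) * 4 = 4^n := by
        rw [← pow_succ]; congr 1; omega
      calc 3 * (n-1) * 4^(n-1) * 4 = 3 * (n-1) * (4^(n-1) * 4) := by ring
        _ = 3 * (n-1) * 4^n := by rw [this]
        _ ≤ 3 * n * 4^n := by
            apply Nat.mul_le_mul_right; apply Nat.mul_le_mul_left; omega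
    calc 2 * (n+1)^2 ≤ 4 * (2 * n^2) := h1
      _ ≤ 4 * (3 * (n-1) * 4^(n-1)) := by omega
      _ = 3 * (n-1) * 4^(n-1) * 4 := by ring
      _ ≤ 3 * n * 4^n := h2
      _ = 3 * ((n+1)-1) * 4^((n+1)-1) := by norm_num

-- Lemma B
private lemma lemB (M : ℕ) (hM : 2 ≤ M) :
    (M:ℝ) * 2^(M-1) < 4^(M-1) *
      (Real.sqrt Real.pi * Real.Gamma (((M:ℝ)+1)/2) / Real.Gamma ((M:ℝ)/2)) := by
  have hMr : (2:ℝ) ≤ (M:ℝ) := by exact_mod_cast hM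
  have hx : (0:ℝ) < ((M:ℝ)-1)/2 := by linarith
  have hy : (0:ℝ) < ((M:ℝ)+1)/2 := by linarith
  have hm : (0:ℝ) < (M:ℝ)/2 := by linarith
  have hΓx := Real.Gamma_pos_of_pos hx
  have hΓy := Real.Gamma_pos_of_pos hy
  have hΓm := Real.Gamma_pos_of_pos hm
  have hπ : 0 < Real.sqrt Real.pi := Real.sqrt_pos.mpr Real.pi_pos
  set S := Real.sqrt Real.pi * Real.Gamma (((M:ℝ)+1)/2) / Real.Gamma ((M:ℝ)/2) with hS
  set T := Real.sqrt Real.pi * Real.Gamma ((M:ℝ)/2) / Real.Gamma (((M:ℝ)-1)/2) with hT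
  have hSpos : 0 < S := by positivity
  have hTpos : 0 < T := by positivity
  -- recurrence
  have hrec : Real.Gamma (((M:ℝ)+1)/2) = (((M:ℝ)-1)/2) * Real.Gamma (((M:ℝ)-1)/2) := by
    have := Real.Gamma_add_one hx.ne'
    rw [show ((M:ℝ)-1)/2 + 1 = ((M:ℝ)+1)/2 by ring] at this
    exact this
  -- S*T = π (M-1)/2
  have hST : S * T = Real.pi * ((M:ℝ)-1)/2 := by
    rw [hS, hT]
    field_simp
    rw [hrec]
    have hππ : Real.sqrt Real.pi * Real.sqrt Real.pi = Real.pi :=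
      Real.mul_self_sqrt Real.pi_pos.le
    linear_combination (((M:ℝ)-1) * Real.Gamma (((M:ℝ)-1)/2)) * hππ
  -- S ≥ T
  have hTS : T ≤ S := by
    have := gamma_sq_le hx hy
    rw [show (((M:ℝ)-1)/2 + ((M:ℝ)+1)/2)/2 = (M:ℝ)/2 by ring] at this
    rw [hS, hT, div_le_div_iff₀ hΓx hΓm]
    nlinarith
  have hS2 : Real.pi * ((M:ℝ)-1)/2 ≤ S^2 := by nlinarith
  -- numeric part
  have hnat : 2 * (M:ℝ)^2 ≤ 3 * ((M:ℝ)-1) * 4^(M-1) := by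
    have := nat_ineq M hM
    have hcast : ((2 * M^2 : ℕ) : ℝ) ≤ ((3 * (M-1) * 4^(M-1) : ℕ) : ℝ) := by exact_mod_cast this
    push_cast at hcast
    rw [Nat.cast_sub (by omega : 1 ≤ M)] at hcast
    push_cast at hcast
    linarith
  have hA : (0:ℝ) < 2^(M-1) := by positivity
  have h4 : ((4:ℝ))^(M-1) = (2^(M-1))^2 := by
    rw [← pow_mul, show (4:ℝ) = 2^2 by norm_num, ← pow_mul]; ring_nf
  -- M < S * 2^(M-1)
  have hπ3 : (3:ℝ) < Real.pi := Real.pi_gt_three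
  have hM2 : (M:ℝ)^2 < S^2 * (2^(M-1))^2 := by
    have h1 : (M:ℝ)^2 ≤ (3/2) * ((M:ℝ)-1) * (2^(M-1))^2 := by rw [← h4]; linarith
    have h2 : (3/2) * ((M:ℝ)-1) * (2^(M-1))^2 < (Real.pi/2) * ((M:ℝ)-1) * (2^(M-1))^2 := by
      apply mul_lt_mul_of_pos_right _ (by positivity)
      apply mul_lt_mul_of_pos_right _ (by linarith)
      linarith
    have h3 : (Real.pi/2) * ((M:ℝ)-1) * (2^(M-1))^2 ≤ S^2 * (2^(M-1))^2 := by
      apply mul_le_mul_of_nonneg_right _ (by positivity)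
      calc Real.pi/2 * ((M:ℝ)-1) = Real.pi * ((M:ℝ)-1)/2 := by ring
        _ ≤ S^2 := hS2
    linarith
  have hMlt : (M:ℝ) < S * 2^(M-1) := by
    have h0 : (0:ℝ) ≤ S * 2^(M-1) := by positivity
    refine lt_of_pow_lt_pow_left₀ 2 h0 ?_
    calc (M:ℝ)^2 < S^2 * (2^(M-1))^2 := hM2
      _ = (S * 2^(M-1))^2 := by ring
  calc (M:ℝ) * 2^(M-1) < (S * 2^(M-1)) * 2^(M-1) := by
        apply mul_lt_mul_of_pos_right hMlt hA
    _ = (2^(M-1))^2 * S := by ring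
    _ = 4^(M-1) * S := by rw [h4]


private lemma exists_eps (M m : ℕ) (hm1 : 1 ≤ m) (C : ℝ) (hlt : (M:ℝ) * 2^m < C) :
    ∃ ε : ℝ, 0 < ε ∧ ε ≤ 1 ∧ (M:ℝ) * (2+ε)^m < C := by
  set G : ℝ := C - (M:ℝ) * 2^m with hG
  have hGpos : 0 < G := by rw [hG]; linarith
  set D : ℝ := (M:ℝ) * m * 3^(m-1) with hD
  have hM0 : (0:ℝ) ≤ (M:ℝ) := Nat.cast_nonneg M
  have hDnn : 0 ≤ D := by
    rw [hD]; positivity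
  refine ⟨min 1 (G / (2 * (D + 1))), lt_min one_pos (by positivity), min_le_left _ _, ?_⟩
  set ε : ℝ := min 1 (G / (2 * (D + 1))) with hε
  have hεpos : 0 < ε := lt_min one_pos (by positivity)
  have hε1 : ε ≤ 1 := min_le_left _ _
  have hεD : ε * D ≤ G / 2 := by
    have h1 : ε ≤ G / (2 * (D + 1)) := min_le_right _ _
    have h2 : ε * D ≤ (G / (2 * (D + 1))) * D := mul_le_mul_of_nonneg_right h1 hDnn
    have h3 : (G / (2 * (D + 1))) * D ≤ G / 2 := by
      rw [div_mul_eq_mul_div, div_le_div_iff₀ (by positivity) (by norm_num)]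
      nlinarith
    linarith
  have h2 : (2+ε)^m - 2^m ≤ ε * m * 3^(m-1) := by
    have hb := pow_sub_pow_le' (by norm_num : (0:ℝ) ≤ 2) (by linarith : (2:ℝ) ≤ 2+ε) m
    have h3 : ((2:ℝ)+ε) - 2 = ε := by ring
    rw [h3] at hb
    refine hb.trans ?_
    have h4 : ((2:ℝ)+ε)^(m-1) ≤ 3^(m-1) := pow_le_pow_left₀ (by linarith) (by linarith) _
    have h5 : (0:ℝ) ≤ ε * m := by positivity
    nlinarith
  have h7 := mul_le_mul_of_nonneg_left h2 hM0
  have h8 : (M:ℝ) * (2+ε)^m ≤ (M:ℝ) * 2^m + ε * D := by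
    rw [hD]; nlinarith
  have : (M:ℝ) * 2^m + G / 2 < C := by rw [hG]; linarith
  linarith

/-- Lemma 2: Hamming-type bound for real Grassmannian codebooks.
For all large enough `N`, any `N` unit vectors in `ℝ^M` whose pairwise chordal
distances are all at least `δ > 0` satisfy `δ < 4·λ_M·N^{−1/(M−1)}`, with
`λ_M = (√π·Γ((M+1)/2)/Γ(M/2))^{1/(M−1)}`. -/
theorem stmt14 (M : ℕ) (hM : 2 ≤ M) :
    ∃ N₀ : ℕ, ∀ N : ℕ, N₀ ≤ N →
      ∀ u : Fin N → EuclideanSpace ℝ (Fin M), (∀ i, ‖u i‖ = 1) →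
        ∀ δ : ℝ, 0 < δ →
          (∀ i j : Fin N, i ≠ j →
            δ ≤ Real.sqrt (1 - (inner ℝ (u i) (u j) : ℝ) ^ 2)) →
          δ < 4 * (Real.sqrt Real.pi * Real.Gamma (((M : ℝ) + 1) / 2) /
                Real.Gamma ((M : ℝ) / 2)) ^ ((1 : ℝ) / ((M : ℝ) - 1)) *
              (N : ℝ) ^ (-(1 : ℝ) / ((M : ℝ) - 1)) := by
  set m : ℕ := M - 1 with hm
  have hm1 : 1 ≤ m := by omega
  have hmM : M = m + 1 := by omega
  have hmr : ((M:ℝ) - 1) = (m:ℝ) := by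
    rw [hm, Nat.cast_sub (by omega : 1 ≤ M)]; norm_num
  have hmr0 : ((m:ℝ)) ≠ 0 := by exact_mod_cast (by omega : m ≠ 0)
  set S : ℝ := Real.sqrt Real.pi * Real.Gamma (((M : ℝ) + 1) / 2) /
      Real.Gamma ((M : ℝ) / 2) with hSdef
  have hSpos : 0 < S := by
    have h1 : (0:ℝ) < Real.sqrt Real.pi := Real.sqrt_pos.mpr Real.pi_pos
    have h2 := Real.Gamma_pos_of_pos (show (0:ℝ) < ((M:ℝ)+1)/2 by positivity)
    have h3 := Real.Gamma_pos_of_pos (show (0:ℝ) < (M:ℝ)/2 by positivity)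
    positivity
  have hB : (M:ℝ) * 2^m < 4^m * S := lemB M hM
  obtain ⟨ε, hεpos, hε1, hεB⟩ := exists_eps M m hm1 (4^m * S) hB
  refine ⟨max 2 (⌈(M:ℝ) * 3^m / ε^m⌉₊ + 1), fun N hN u hu δ hδ0 hsep => ?_⟩
  have hN2 : 2 ≤ N := le_trans (le_max_left _ _) hN
  have hNpos : (0:ℝ) < N := by exact_mod_cast (by omega : 0 < N)
  have hδ1 : δ ≤ 1 := by
    have hij : (⟨0, by omega⟩ : Fin N) ≠ ⟨1, by omega⟩ := by
      intro h; exact absurd (congrArg Fin.val h) (by norm_num)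
    refine le_trans (hsep _ _ hij) ?_
    refine Real.sqrt_le_one.mpr ?_
    nlinarith [sq_nonneg (inner ℝ (u ⟨0, by omega⟩) (u ⟨1, by omega⟩) : ℝ)]
  have hpack := pack hM u hu δ hδ0 hδ1 hsep
  set t : ℝ := δ / 2 with ht
  have ht0 : 0 < t := by rw [ht]; linarith
  have ht1 : t ≤ 1/2 := by rw [ht]; linarith
  have hkey : (N:ℝ) * t^m ≤ (M:ℝ) * (1+t)^m := by
    have h1 : (2*(N:ℝ)) * t^M ≤ (1+t)^M - (1-t)^M := by linarith
    have h2 : (1+t)^M - (1-t)^M ≤ ((1+t) - (1-t)) * M * (1+t)^(M-1) :=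
      pow_sub_pow_le' (by linarith) (by linarith) M
    have h3 : ((1+t) - (1-t)) * (M:ℝ) * (1+t)^(M-1) = 2*t*(M:ℝ)*(1+t)^m := by
      rw [← hm]; ring
    have h4 : t^M = t^m * t := by rw [hmM, pow_succ]
    have h5 : (2*(N:ℝ)) * (t^m * t) ≤ 2*t*(M:ℝ)*(1+t)^m := by
      rw [← h4]; linarith
    have h6 := mul_le_mul_of_nonneg_right h5 (le_of_lt (inv_pos.mpr (by linarith : (0:ℝ) < 2*t)))
    calc (N:ℝ) * t^m = (2*(N:ℝ)) * (t^m * t) * (2*t)⁻¹ := by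
          field_simp
      _ ≤ 2*t*(M:ℝ)*(1+t)^m * (2*t)⁻¹ := h6
      _ = (M:ℝ) * (1+t)^m := by field_simp
  have hkey2 : (N:ℝ) * δ^m ≤ (M:ℝ) * (2+δ)^m := by
    have e1 : δ^m = 2^m * t^m := by rw [← mul_pow]; congr 1; rw [ht]; ring
    have e2 : (2+δ)^m = 2^m * (1+t)^m := by
      rw [← mul_pow]; congr 1; rw [ht]; ring
    rw [e1, e2]
    calc (N:ℝ) * (2^m * t^m) = 2^m * ((N:ℝ) * t^m) := by ring
      _ ≤ 2^m * ((M:ℝ) * (1+t)^m) := by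
          apply mul_le_mul_of_nonneg_left hkey (by positivity)
      _ = (M:ℝ) * (2^m * (1+t)^m) := by ring
  have hδε : δ ≤ ε := by
    have h1 : (N:ℝ) * δ^m ≤ (M:ℝ) * 3^m := by
      refine hkey2.trans ?_
      apply mul_le_mul_of_nonneg_left _ (Nat.cast_nonneg M)
      exact pow_le_pow_left₀ (by linarith) (by linarith) m
    have hNbig : (M:ℝ) * 3^m / ε^m ≤ (N:ℝ) := by
      have h2 : (⌈(M:ℝ) * 3^m / ε^m⌉₊ : ℝ) ≤ (N:ℝ) := by
        exact_mod_cast le_trans (le_trans (Nat.le_succ _) (le_max_right 2 _)) hN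
      exact le_trans (Nat.le_ceil _) h2
    have h3 : δ^m ≤ ε^m := by
      have h4 : δ^m ≤ (M:ℝ) * 3^m / (N:ℝ) := by
        rw [le_div_iff₀ hNpos]; linarith [h1]
      have h5 : (M:ℝ) * 3^m / (N:ℝ) ≤ ε^m := by
        rw [div_le_iff₀ hNpos]
        have h6 := mul_le_mul_of_nonneg_left hNbig (le_of_lt (by positivity : (0:ℝ) < ε^m))
        calc (M:ℝ) * 3^m = ε^m * ((M:ℝ) * 3^m / ε^m) := by field_simp
          _ ≤ ε^m * (N:ℝ) := h6
      linarith
    exact le_of_pow_le_pow_left₀ (by omega) hεpos.le h3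
  have hfinal : (N:ℝ) * δ^m < 4^m * S := by
    have h1 : (2+δ)^m ≤ (2+ε)^m := pow_le_pow_left₀ (by linarith) (by linarith) m
    calc (N:ℝ) * δ^m ≤ (M:ℝ) * (2+δ)^m := hkey2
      _ ≤ (M:ℝ) * (2+ε)^m := mul_le_mul_of_nonneg_left h1 (Nat.cast_nonneg M)
      _ < 4^m * S := hεB
  have hRpos : (0:ℝ) < 4 * S ^ ((1 : ℝ) / ((M : ℝ) - 1)) * (N : ℝ) ^ (-(1 : ℝ) / ((M : ℝ) - 1)) :=
    mul_pos (mul_pos four_pos (Real.rpow_pos_of_pos hSpos _)) (Real.rpow_pos_of_pos hNpos _)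
  have hRm : (4 * S ^ ((1 : ℝ) / ((M : ℝ) - 1)) * (N : ℝ) ^ (-(1 : ℝ) / ((M : ℝ) - 1)))^m
      = 4^m * S / (N:ℝ) := by
    rw [mul_pow, mul_pow]
    have e1 : (S ^ ((1 : ℝ) / ((M : ℝ) - 1)))^m = S := by
      rw [← Real.rpow_natCast (S ^ ((1 : ℝ) / ((M : ℝ) - 1))) m,
        ← Real.rpow_mul hSpos.le, hmr, div_mul_cancel₀ _ hmr0, Real.rpow_one]
    have e2 : ((N:ℝ) ^ (-(1 : ℝ) / ((M : ℝ) - 1)))^m = ((N:ℝ))⁻¹ := by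
      rw [← Real.rpow_natCast ((N:ℝ) ^ (-(1 : ℝ) / ((M : ℝ) - 1))) m,
        ← Real.rpow_mul hNpos.le, hmr]
      rw [show -(1:ℝ) / (m:ℝ) * (m:ℝ) = -1 by field_simp, Real.rpow_neg_one]
    rw [e1, e2]
    field_simp
  refine lt_of_pow_lt_pow_left₀ m hRpos.le ?_
  rw [hRm, lt_div_iff₀ hNpos]
  calc δ^m * (N:ℝ) = (N:ℝ) * δ^m := by ring
    _ < 4^m * S := hfinal
end

section
/- (Theorem 3) Let M ≥ 2 be an integer, define λ_M = (√π·Γ((M+1)/2)/Γ(M/2))^{1/(M−1)}, and let B ∈ ℝ. Consider the function g : ℝ → ℝ given by g(x) = 2^{−x} + 16·λ_M²·2^{−2(B−x)/(M−1)}, i.e., the relaxed objective Ṅ^{−1} + 16λ_M²·N̈^{−2/(M−1)} with Ṅ = 2^x and N̈ = 2^{B−x}. Then g has a unique global minimizer on ℝ, attained at x* = 2B/(M+1) − κ, where κ = ((M−1)/(M+1))·log₂(32·λ_M²/(M−1)). Equivalently, the optimal number of magnitude quantization bits is Ḃ = 2B/(M+1) − κ and the optimal number of direction quantization bits is B̈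 = B − Ḃ = ((M−1)/(M+1))·B + κ. -/
set_option maxHeartbeats 1000000 in
/-- Theorem 3: the relaxed excess-power objective
`g(x) = 2^{−x} + 16·λ_M²·2^{−2(B−x)/(M−1)}` has a unique global minimizer,
attained at `x* = 2B/(M+1) − κ` with
`κ = ((M−1)/(M+1))·log₂(32·λ_M²/(M−1))`. -/
theorem stmt16 (M : ℕ) (hM : 2 ≤ M) (B : ℝ)
    (lam : ℝ)
    (hlam : lam = (Real.sqrt Real.pi * Real.Gamma (((M : ℝ) + 1) / 2) /
        Real.Gamma ((M : ℝ) / 2)) ^ ((1 : ℝ) / ((M : ℝ) - 1)))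
    (κ : ℝ)
    (hκ : κ = (((M : ℝ) - 1) / ((M : ℝ) + 1)) *
        Real.logb 2 (32 * lam ^ 2 / ((M : ℝ) - 1)))
    (g : ℝ → ℝ)
    (hg : ∀ x : ℝ, g x = (2 : ℝ) ^ (-x) +
        16 * lam ^ 2 * (2 : ℝ) ^ (-2 * (B - x) / ((M : ℝ) - 1))) :
    ∀ x : ℝ, x ≠ 2 * B / ((M : ℝ) + 1) - κ →
      g (2 * B / ((M : ℝ) + 1) - κ) < g x := by
  have hM2 : (2 : ℝ) ≤ (M : ℝ) := by exact_mod_cast hM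
  set m : ℝ := (M : ℝ) - 1 with hmdef
  have hm : 0 < m := by simp only [hmdef]; linarith
  have hM1 : (0 : ℝ) < (M : ℝ) + 1 := by linarith
  have hlampos : 0 < lam := by
    rw [hlam]
    apply Real.rpow_pos_of_pos
    apply div_pos
    · exact mul_pos (Real.sqrt_pos.mpr Real.pi_pos)
        (Real.Gamma_pos_of_pos (by linarith))
    · exact Real.Gamma_pos_of_pos (by linarith)
  have hc : 0 < 32 * lam ^ 2 / m := by positivity
  set t : ℝ := Real.logb 2 (32 * lam ^ 2 / m) with htdef
  have ht : (2 : ℝ) ^ t = 32 * lam ^ 2 / m :=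
    Real.rpow_logb (by norm_num) (by norm_num) hc
  set x₀ : ℝ := 2 * B / ((M : ℝ) + 1) - κ with hx0def
  have hκ' : κ = (m / ((M : ℝ) + 1)) * t := hκ
  have h16 : 16 * lam ^ 2 = (m / 2) * (2 : ℝ) ^ t := by
    rw [ht]; field_simp; ring
  have hexp0 : t + (-2 * (B - x₀) / m) = -x₀ := by
    rw [hx0def, hκ']
    field_simp
    ring
  have hkey : 16 * lam ^ 2 * (2 : ℝ) ^ (-2 * (B - x₀) / m)
      = (m / 2) * (2 : ℝ) ^ (-x₀) := by
    rw [h16, mul_assoc, ← Real.rpow_add (by norm_num : (0:ℝ) < 2), hexp0]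
  intro x hx
  have hu : x - x₀ ≠ 0 := sub_ne_zero.mpr hx
  set u : ℝ := x - x₀ with hudef
  have hL : 0 < Real.log 2 := Real.log_pos (by norm_num)
  -- split the two exponentials
  have e1 : (2 : ℝ) ^ (-x) = (2 : ℝ) ^ (-x₀) * (2 : ℝ) ^ (-u) := by
    rw [← Real.rpow_add (by norm_num : (0:ℝ) < 2)]
    congr 1
    simp [hudef]; ring
  have e2 : (-2 * (B - x) / m) = (-2 * (B - x₀) / m) + 2 * u / m := by
    field_simp [hudef]; ring
  have e3 : 16 * lam ^ 2 * (2 : ℝ) ^ (-2 * (B - x) / m)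
      = (m / 2) * (2 : ℝ) ^ (-x₀) * (2 : ℝ) ^ (2 * u / m) := by
    rw [e2, Real.rpow_add (by norm_num : (0:ℝ) < 2), ← mul_assoc, hkey]
  -- strict convexity bounds
  have ha : (0 : ℝ) < (2 : ℝ) ^ (-x₀) := Real.rpow_pos_of_pos (by norm_num) _
  have hb1 : Real.log 2 * (-u) + 1 < (2 : ℝ) ^ (-u) := by
    rw [Real.rpow_def_of_pos (by norm_num : (0:ℝ) < 2)]
    exact Real.add_one_lt_exp (by
      simp only [mul_ne_zero_iff]
      exact ⟨ne_of_gt hL, neg_ne_zero.mpr hu⟩)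
  have hb2 : Real.log 2 * (2 * u / m) + 1 < (2 : ℝ) ^ (2 * u / m) := by
    rw [Real.rpow_def_of_pos (by norm_num : (0:ℝ) < 2)]
    refine Real.add_one_lt_exp ?_
    have : 2 * u / m ≠ 0 := by
      apply div_ne_zero _ (ne_of_gt hm)
      exact mul_ne_zero (by norm_num) hu
    exact mul_ne_zero (ne_of_gt hL) this
  have hsum : 1 + m / 2 < (2 : ℝ) ^ (-u) + (m / 2) * (2 : ℝ) ^ (2 * u / m) := by
    have h2 : (m / 2) * (Real.log 2 * (2 * u / m) + 1)
        < (m / 2) * (2 : ℝ) ^ (2 * u / m) :=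
      (mul_lt_mul_iff_right₀ (by positivity)).mpr hb2
    have hcalc : (m / 2) * (Real.log 2 * (2 * u / m) + 1)
        = Real.log 2 * u + m / 2 := by
      field_simp
    nlinarith [hb1]
  have hgx : g x = (2 : ℝ) ^ (-x₀) * (2 : ℝ) ^ (-u)
      + (m / 2) * (2 : ℝ) ^ (-x₀) * (2 : ℝ) ^ (2 * u / m) := by
    rw [hg, e1, e3]
  have hgx0 : g x₀ = (2 : ℝ) ^ (-x₀) * (1 + m / 2) := by
    rw [hg, hkey]; ring
  rw [hgx, hgx0]
  nlinarith [hsum, ha]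
end
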